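/- arXiv:0809.4889 — 8 statements merged into one kernel-verified Lean document; each statement's English description precedes it below -/
import Mathlib

section
/- Let c ∈ ℂ and let f : ℂⁿ × ℂⁿ → ℝ be defined by f(x,y) = |∑_{i=1}^n x_i y_i − c|², where ℂⁿ × ℂⁿ is regarded as a real inner product space with inner product ⟨(x,y),(x',y')⟩ = Re(∑_i x_i conj(x'_i)) + Re(∑_i y_i conj(y'_i)). Then for every curve γ : ℝ → ℂⁿ × ℂⁿ satisfying γ'(t) = −grad f(γ(t)) for all t ≥ 0, the image γ([0,∞)) is a bounded set (equivalently, it is contained in a compact subset of ℂⁿ × ℂⁿ). In other words, −f = −‖μ_ℂ‖² is flow-closed for the linear circle action on the quaternionic vector space ℍⁿ = ℂⁿ × ℂⁿ. -/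
/-!
STATEMENT 0: Flow-closedness of `-‖μ_ℂ‖²` for the linear circle action on `ℍⁿ = ℂⁿ × ℂⁿ`.

We regard `ℂⁿ × ℂⁿ` as a real inner product space via
`⟪(x,y),(x',y')⟫ = Re ∑ xᵢ conj x'ᵢ + Re ∑ yᵢ conj y'ᵢ`,
which is the inner product of `WithLp 2 (EuclideanSpace ℂ (Fin n) × EuclideanSpace ℂ (Fin n))`
viewed as a real inner product space.
-/

noncomputable section

/-- `ℂⁿ × ℂⁿ` with its (real) L² inner product structure. -/
abbrev HypVS (n : ℕ) : Type :=
  WithLp 2 (EuclideanSpace ℂ (Fin n) × EuclideanSpace ℂ (Fin n))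

/-- first component `x` of a point of `ℂⁿ × ℂⁿ` -/
def xPart {n : ℕ} (p : HypVS n) : EuclideanSpace ℂ (Fin n) :=
  (WithLp.equiv 2 (EuclideanSpace ℂ (Fin n) × EuclideanSpace ℂ (Fin n)) p).1

/-- second component `y` of a point of `ℂⁿ × ℂⁿ` -/
def yPart {n : ℕ} (p : HypVS n) : EuclideanSpace ℂ (Fin n) :=
  (WithLp.equiv 2 (EuclideanSpace ℂ (Fin n) × EuclideanSpace ℂ (Fin n)) p).2

/-- The complex moment map `μ_ℂ(x,y) = ∑ xᵢ yᵢ - c`. -/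
def muC {n : ℕ} (c : ℂ) (p : HypVS n) : ℂ :=
  (∑ i, xPart p i * yPart p i) - c

namespace Stmt0Aux
open ComplexConjugate

variable {n : ℕ}

def Xc (n : ℕ) (i : Fin n) : HypVS n →L[ℝ] ℂ :=
  ((EuclideanSpace.proj i).restrictScalars ℝ).comp
    (((ContinuousLinearMap.fst ℂ _ _).restrictScalars ℝ).comp
      (WithLp.prodContinuousLinearEquiv 2 ℝ _ _).toContinuousLinearMap)

def Yc (n : ℕ) (i : Fin n) : HypVS n →L[ℝ] ℂ :=
  ((EuclideanSpace.proj i).restrictScalars ℝ).comp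
    (((ContinuousLinearMap.snd ℂ _ _).restrictScalars ℝ).comp
      (WithLp.prodContinuousLinearEquiv 2 ℝ _ _).toContinuousLinearMap)

@[simp] lemma Xc_apply (i : Fin n) (p : HypVS n) : Xc n i p = xPart p i := rfl
@[simp] lemma Yc_apply (i : Fin n) (p : HypVS n) : Yc n i p = yPart p i := rfl

/-- the candidate gradient of `|μ_ℂ|²` -/
def gradF (c : ℂ) (p : HypVS n) : HypVS n :=
  (WithLp.equiv 2 _).symm
    ((WithLp.equiv 2 ((_ : Fin n) → ℂ)).symm (fun i => 2 * muC c p * conj (yPart p i)),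
     (WithLp.equiv 2 ((_ : Fin n) → ℂ)).symm (fun i => 2 * muC c p * conj (xPart p i)))

@[simp] lemma xPart_gradF (c : ℂ) (p : HypVS n) (i : Fin n) :
    xPart (gradF c p) i = 2 * muC c p * conj (yPart p i) := rfl
@[simp] lemma yPart_gradF (c : ℂ) (p : HypVS n) (i : Fin n) :
    yPart (gradF c p) i = 2 * muC c p * conj (xPart p i) := rfl

lemma inner_eq (p q : HypVS n) :
    (inner ℝ p q : ℝ) = ∑ i, (conj (xPart p i) * xPart q i).re
      + ∑ i, (conj (yPart p i) * yPart q i).re := by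
  rw [WithLp.prod_inner_apply]
  congr 1 <;> rw [PiLp.inner_apply] <;> refine Finset.sum_congr rfl fun i _ => ?_ <;>
    rw [Complex.inner, mul_comm] <;> rfl

lemma hasFDeriv_mu (c : ℂ) (p : HypVS n) :
    HasFDerivAt (muC c)
      (∑ i, (xPart p i • Yc n i + yPart p i • Xc n i)) p := by
  have h : ∀ i : Fin n, HasFDerivAt (fun q : HypVS n => xPart q i * yPart q i)
      (xPart p i • Yc n i + yPart p i • Xc n i) p := by
    intro i
    have hx : HasFDerivAt (fun q : HypVS n => xPart q i) (Xc n i) p := (Xc n i).hasFDerivAt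
    have hy : HasFDerivAt (fun q : HypVS n => yPart q i) (Yc n i) p := (Yc n i).hasFDerivAt
    exact hx.mul hy
  have := HasFDerivAt.fun_sum (fun i (_ : i ∈ Finset.univ) => h i)
  exact this.sub_const c

lemma hasGradient (c : ℂ) (f : HypVS n → ℝ) (hf : ∀ p, f p = ‖muC c p‖ ^ 2)
    (p : HypVS n) : HasGradientAt f (gradF c p) p := by
  set D := (∑ i, (xPart p i • Yc n i + yPart p i • Xc n i)) with hD
  have hμ : HasFDerivAt (muC c) D p := hasFDeriv_mu c p
  have hre : HasFDerivAt (fun q : HypVS n => (muC c q).re) (Complex.reCLM.comp D) p :=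
    (Complex.reCLM.hasFDerivAt).comp p hμ
  have him : HasFDerivAt (fun q : HypVS n => (muC c q).im) (Complex.imCLM.comp D) p :=
    (Complex.imCLM.hasFDerivAt).comp p hμ
  have hF : HasFDerivAt f
      (((muC c p).re • Complex.reCLM.comp D + (muC c p).re • Complex.reCLM.comp D)
        + ((muC c p).im • Complex.imCLM.comp D + (muC c p).im • Complex.imCLM.comp D)) p := by
    have hfe : f = fun q : HypVS n =>
        (muC c q).re * (muC c q).re + (muC c q).im * (muC c q).im := by
      funext q
      rw [hf q, Complex.sq_norm, Complex.normSq_apply]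
    rw [hfe]
    exact (hre.mul hre).add (him.mul him)
  rw [hasGradientAt_iff_hasFDerivAt]
  refine hF.congr_fderiv ?_
  symm
  apply ContinuousLinearMap.ext
  intro v
  rw [InnerProductSpace.toDual_apply_apply, inner_eq]
  simp only [xPart_gradF, yPart_gradF, ContinuousLinearMap.add_apply,
    ContinuousLinearMap.smul_apply, ContinuousLinearMap.coe_comp', Function.comp_apply,
    map_sum, Complex.reCLM_apply, Complex.imCLM_apply, hD, ContinuousLinearMap.sum_apply, Xc_apply, Yc_apply,
    Complex.re_sum, Complex.im_sum, smul_eq_mul]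
  simp only [Finset.mul_sum, ← Finset.sum_add_distrib]
  apply Finset.sum_congr rfl
  intro i _
  simp only [map_mul, Complex.add_re, Complex.add_im, Complex.mul_re, Complex.mul_im,
    Complex.conj_re, Complex.conj_im, Complex.ofReal_re, Complex.ofReal_im, Complex.re_ofNat, Complex.im_ofNat]
  ring

lemma inner_gradF_self (c : ℂ) (p : HypVS n) :
    (inner ℝ (gradF c p) p : ℝ) = 4 * ((starRingEnd ℂ) (muC c p) * (muC c p + c)).re := by
  rw [inner_eq]
  have h : muC c p + c = ∑ i, xPart p i * yPart p i := by rw [muC]; ring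
  rw [h, Finset.mul_sum, Complex.re_sum, Finset.mul_sum, ← Finset.sum_add_distrib]
  apply Finset.sum_congr rfl
  intro i _
  simp only [xPart_gradF, yPart_gradF, map_mul, Complex.mul_re, Complex.mul_im,
    Complex.conj_re, Complex.conj_im, Complex.re_ofNat, Complex.im_ofNat]
  ring

lemma inner_gradF_gradF (c : ℂ) (p : HypVS n) :
    (inner ℝ (gradF c p) (gradF c p) : ℝ)
      = 4 * ‖muC c p‖ ^ 2 * (inner ℝ p p : ℝ) := by
  rw [inner_eq, inner_eq, Complex.sq_norm, Complex.normSq_apply, mul_add, Finset.mul_sum,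
    Finset.mul_sum, ← Finset.sum_add_distrib, ← Finset.sum_add_distrib]
  apply Finset.sum_congr rfl
  intro i _
  simp only [xPart_gradF, yPart_gradF, map_mul, Complex.mul_re, Complex.mul_im,
    Complex.conj_re, Complex.conj_im, Complex.re_ofNat, Complex.im_ofNat]
  ring

end Stmt0Aux

open Stmt0Aux Set in
theorem stmt0 (n : ℕ) (c : ℂ) (f : HypVS n → ℝ)
    (hf : ∀ p, f p = ‖muC c p‖ ^ 2)
    (γ : ℝ → HypVS n)
    (hγ : ∀ t : ℝ, 0 ≤ t → HasDerivAt γ (-(gradient f (γ t))) t) :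
    Bornology.IsBounded (γ '' Set.Ici 0) ∧
      ∃ K : Set (HypVS n), IsCompact K ∧ γ '' Set.Ici 0 ⊆ K := by
  have hfnonneg : ∀ p, 0 ≤ f p := fun p => (hf p).symm ▸ sq_nonneg _
  have hgrad : ∀ p, gradient f p = gradF c p := fun p => (hasGradient c f hf p).gradient
  -- continuity of γ on Ici 0 and an everywhere-continuous version of ‖γ‖²
  have hγc : ContinuousOn γ (Ici 0) := fun t ht =>
    ((hγ t ht).continuousAt).continuousWithinAt
  have hγmax : Continuous fun t : ℝ => γ (max t 0) :=
    hγc.comp_continuous (continuous_id.max continuous_const) fun t => Set.mem_Ici.mpr (le_max_right _ _)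
  set G : ℝ → ℝ := fun t => ‖γ (max t 0)‖ ^ 2 with hGdef
  have hGcont : Continuous G := (hγmax.norm).pow 2
  have hGnonneg : ∀ t, 0 ≤ G t := fun t => pow_nonneg (norm_nonneg _) 2
  have hGeq : ∀ t, 0 ≤ t → G t = ‖γ t‖ ^ 2 := by
    intro t ht; simp only [hGdef, max_eq_left ht]
  set I : ℝ → ℝ := fun t => ∫ u in (0:ℝ)..t, G u with hIdef
  have hI : ∀ t : ℝ, HasDerivAt I (G t) t := fun t =>
    intervalIntegral.integral_hasDerivAt_right (hGcont.intervalIntegrable _ _)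
      (hGcont.stronglyMeasurableAtFilter _ _) hGcont.continuousAt
  have hInonneg : ∀ t, 0 ≤ t → 0 ≤ I t := fun t ht =>
    intervalIntegral.integral_nonneg ht fun u _ => hGnonneg u
  -- derivative of f ∘ γ
  have hfd : ∀ t, 0 ≤ t → HasDerivAt (fun u => f (γ u)) (-(4 * f (γ t) * G t)) t := by
    intro t ht
    have h1 := (hasGradientAt_iff_hasFDerivAt.mp
      (hasGradient c f hf (γ t))).comp_hasDerivAt t (hγ t ht)
    have h2 : (InnerProductSpace.toDual ℝ (HypVS n) (gradF c (γ t)))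
        (-(gradient f (γ t))) = -(4 * f (γ t) * G t) := by
      rw [InnerProductSpace.toDual_apply_apply, hgrad, inner_neg_right, inner_gradF_gradF,
        real_inner_self_eq_norm_sq, ← hGeq t ht, ← hf]
    rw [h2] at h1
    exact h1
  -- derivative of ‖γ‖²
  have hNd : ∀ t, 0 ≤ t → HasDerivAt (fun u => ‖γ u‖ ^ 2)
      (-(2 * (inner ℝ (gradF c (γ t)) (γ t) : ℝ))) t := by
    intro t ht
    have h1 := HasDerivAt.inner ℝ (hγ t ht) (hγ t ht)
    have h2 : (fun u => (inner ℝ (γ u) (γ u) : ℝ)) = fun u => ‖γ u‖ ^ 2 := by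
      funext u; rw [real_inner_self_eq_norm_sq]
    rw [h2] at h1
    refine h1.congr_deriv ?_
    rw [hgrad, inner_neg_right, inner_neg_left, real_inner_comm]
    ring
  -- exponential formula for f ∘ γ
  have hexp : ∀ t, 0 ≤ t → f (γ t) = f (γ 0) * Real.exp (-(4 * I t)) := by
    intro t ht
    set F : ℝ → ℝ := fun u => f (γ u) * Real.exp (4 * I u) with hFdef
    have hFd : ∀ u, 0 ≤ u → HasDerivAt F 0 u := by
      intro u hu
      have := (hfd u hu).mul (((hI u).const_mul 4).exp)
      refine this.congr_deriv ?_
      ring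
    have hconst : F t = F 0 :=
      constant_of_has_deriv_right_zero (a := 0) (b := t)
        (fun x hx => ((hFd x hx.1).continuousAt).continuousWithinAt)
        (fun x hx => (hFd x hx.1).hasDerivWithinAt) t ⟨ht, le_refl t⟩
    have hI0 : I 0 = 0 := intervalIntegral.integral_same
    simp only [hFdef, hI0, mul_zero, Real.exp_zero, mul_one] at hconst
    rw [← hconst, mul_assoc, ← Real.exp_add]
    simp
  -- the modulus of μ along the flow
  set r0 : ℝ := Real.sqrt (f (γ 0)) with hr0def
  have hr0 : 0 ≤ r0 := Real.sqrt_nonneg _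
  have habs : ∀ t, 0 ≤ t → ‖muC c (γ t)‖ = r0 * Real.exp (-(2 * I t)) := by
    intro t ht
    have hEsq : Real.exp (-(2 * I t)) ^ 2 = Real.exp (-(4 * I t)) := by
      rw [sq, ← Real.exp_add]; ring_nf
    have h1 : f (γ t) = (r0 * Real.exp (-(2 * I t))) ^ 2 := by
      rw [hexp t ht, mul_pow, hEsq, hr0def, Real.sq_sqrt (hfnonneg _)]
    have h2 : ‖muC c (γ t)‖ = Real.sqrt (f (γ t)) := by
      rw [hf]
      exact (Real.sqrt_sq (norm_nonneg _)).symm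
    rw [h2, h1, Real.sqrt_sq (mul_nonneg hr0 (Real.exp_pos _).le)]
  set cc : ℝ := ‖c‖ with hccdef
  have hcc : 0 ≤ cc := norm_nonneg _
  have h4ccr0 : 0 ≤ 4 * cc * r0 := mul_nonneg (mul_nonneg (by norm_num) hcc) hr0
  -- the Lyapunov function Φ and its derivative D
  set Φ : ℝ → ℝ := fun t => ‖γ t‖ ^ 2 + (4 * cc * r0) * Real.exp (-(2 * I t)) with hΦdef
  set D : ℝ → ℝ := fun t => -(2 * (inner ℝ (gradF c (γ t)) (γ t) : ℝ))
      + (4 * cc * r0) * (Real.exp (-(2 * I t)) * (-(2 * G t))) with hDdef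
  have hΦd : ∀ t, 0 ≤ t → HasDerivAt Φ (D t) t := by
    intro t ht
    have h1 : HasDerivAt (fun u => -(2 * I u)) (-(2 * G t)) t := ((hI t).const_mul 2).neg
    exact (hNd t ht).add ((h1.exp).const_mul (4 * cc * r0))
  have hDle : ∀ t, 0 ≤ t → 1 ≤ G t → D t ≤ 0 := by
    intro t ht hG
    set μ := muC c (γ t) with hμdef
    set a := ‖μ‖ with hadef
    have ha : 0 ≤ a := norm_nonneg _
    have h1 : (inner ℝ (gradF c (γ t)) (γ t) : ℝ)
        = 4 * ((starRingEnd ℂ) μ * μ).re + 4 * ((starRingEnd ℂ) μ * c).re := by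
      rw [inner_gradF_self, mul_add, Complex.add_re]; ring
    have h2 : ((starRingEnd ℂ) μ * μ).re = a ^ 2 := by
      rw [mul_comm, Complex.mul_conj, Complex.ofReal_re, hadef, Complex.sq_norm]
    have h3 : -(((starRingEnd ℂ) μ * c).re) ≤ a * cc := by
      have hb := Complex.abs_re_le_norm ((starRingEnd ℂ) μ * c)
      have habs2 : ‖(starRingEnd ℂ) μ * c‖ = a * cc := by
        rw [norm_mul, Complex.norm_conj]
      calc -(((starRingEnd ℂ) μ * c).re) ≤ |((starRingEnd ℂ) μ * c).re| := neg_le_abs _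
        _ ≤ a * cc := habs2 ▸ hb
    have h4 : a = r0 * Real.exp (-(2 * I t)) := habs t ht
    have h5 : (4 * cc * r0) * (Real.exp (-(2 * I t)) * (-(2 * G t)))
        = -(8 * cc * (a * G t)) := by rw [h4]; ring
    show -(2 * (inner ℝ (gradF c (γ t)) (γ t) : ℝ))
      + (4 * cc * r0) * (Real.exp (-(2 * I t)) * (-(2 * G t))) ≤ 0
    rw [h1, h5]
    nlinarith [mul_nonneg (mul_nonneg ha hcc) (sub_nonneg.mpr hG), sq_nonneg a,
      mul_nonneg ha hcc]
  have hΦcont : ContinuousOn Φ (Ici 0) := fun t ht =>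
    ((hΦd t ht).continuousAt).continuousWithinAt
  set A : ℝ := max (Φ 0) (1 + 4 * cc * r0) with hAdef
  have key : ∀ t, 0 ≤ t → Φ t ≤ A := by
    intro t₁ ht₁
    by_contra hcon
    push_neg at hcon
    have hΦ0 : Φ 0 ≤ A := le_max_left _ _
    set S : Set ℝ := {u | u ∈ Icc 0 t₁ ∧ Φ u ≤ A} with hSdef
    have hS0 : (0:ℝ) ∈ S := ⟨⟨le_refl 0, ht₁⟩, hΦ0⟩
    have hSb : BddAbove S := ⟨t₁, fun u hu => hu.1.2⟩
    set T := sSup S with hTdef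
    have hTmem : T ∈ Icc 0 t₁ := ⟨le_csSup hSb hS0, csSup_le ⟨0, hS0⟩ fun u hu => hu.1.2⟩
    have hTc : T ∈ closure S := csSup_mem_closure ⟨0, hS0⟩ hSb
    have hΦT : Φ T ≤ A := by
      have hne : (nhdsWithin T S).NeBot := mem_closure_iff_nhdsWithin_neBot.mp hTc
      have hcw : ContinuousWithinAt Φ S T := (hΦcont T hTmem.1).mono fun u hu => hu.1.1
      exact le_of_tendsto hcw (eventually_nhdsWithin_of_forall fun u hu => hu.2)
    have hTlt : T < t₁ :=
      lt_of_le_of_ne hTmem.2 fun h => absurd (h ▸ hΦT) (not_le.mpr hcon)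
    have hgt : ∀ u, u ∈ Ioc T t₁ → A < Φ u := by
      intro u hu
      by_contra h; push_neg at h
      have hmem : u ∈ S := ⟨⟨hTmem.1.trans hu.1.le, hu.2⟩, h⟩
      exact absurd (le_csSup hSb hmem) (not_le.mpr hu.1)
    have hanti : AntitoneOn Φ (Icc T t₁) := by
      apply antitoneOn_of_deriv_nonpos (convex_Icc T t₁)
        (hΦcont.mono fun u hu => hTmem.1.trans hu.1)
      · intro u hu
        rw [interior_Icc] at hu
        exact ((hΦd u (hTmem.1.trans hu.1.le)).differentiableAt).differentiableWithinAt
      · intro u hu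
        rw [interior_Icc] at hu
        have hu0 : 0 ≤ u := hTmem.1.trans hu.1.le
        rw [(hΦd u hu0).deriv]
        apply hDle u hu0
        have hAu : A < Φ u := hgt u ⟨hu.1, hu.2.le⟩
        have h1A : 1 + 4 * cc * r0 ≤ A := le_max_right _ _
        have hexple : (4 * cc * r0) * Real.exp (-(2 * I u)) ≤ 4 * cc * r0 :=
          mul_le_of_le_one_right h4ccr0
            (Real.exp_le_one_iff.mpr (neg_nonpos.mpr
              (mul_nonneg (by norm_num) (hInonneg u hu0))))
        have hΦu : Φ u = ‖γ u‖ ^ 2 + (4 * cc * r0) * Real.exp (-(2 * I u)) := rfl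
        rw [hGeq u hu0]
        linarith
    have hfin : Φ t₁ ≤ Φ T := hanti ⟨le_refl T, hTlt.le⟩ ⟨hTlt.le, le_refl t₁⟩ hTlt.le
    linarith
  have hball : γ '' Ici 0 ⊆ Metric.closedBall 0 (Real.sqrt A) := by
    rintro _ ⟨t, ht, rfl⟩
    rw [Metric.mem_closedBall, dist_zero_right]
    have hX : 0 ≤ (4 * cc * r0) * Real.exp (-(2 * I t)) :=
      mul_nonneg h4ccr0 (Real.exp_pos _).le
    have hΦt : Φ t = ‖γ t‖ ^ 2 + (4 * cc * r0) * Real.exp (-(2 * I t)) := rfl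
    have h1 : ‖γ t‖ ^ 2 ≤ A := by have := key t ht; linarith
    have h2 := Real.sqrt_le_sqrt h1
    rwa [Real.sqrt_sq (norm_nonneg _)] at h2
  exact ⟨(Metric.isBounded_closedBall).subset hball,
    Metric.closedBall 0 (Real.sqrt A), isCompact_closedBall _ _, hball⟩
end
end

section
/- Let c ∈ ℂ, f(x,y) = |∑_{i=1}^n x_i y_i − c|² and ρ(x,y) = ‖x‖² + ‖y‖² on ℂⁿ × ℂⁿ regarded as a real inner product space. Let γ : ℝ → ℂⁿ × ℂⁿ satisfy γ'(t) = −grad f(γ(t)) for all t ≥ 0, and suppose that ∑_i x_i y_i ≠ c at γ(t) for all t ≥ 0 (i.e. f(γ(t)) > 0). Then for all t ≥ 0, ρ(γ(t)) + √(f(γ(t))) ≤ max{ 4|c| + √(f(γ(0))), ρ(γ(0)) + √(f(γ(0))) }. -/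
/-!
STATEMENT 1: Along the negative gradient flow of `f = |μ_ℂ|²` which avoids `μ_ℂ = 0`,
the quantity `ρ + √f` is bounded by `max (4|c| + √f₀) (ρ₀ + √f₀)`.
-/

noncomputable section

open ComplexConjugate

abbrev Eu (n : ℕ) := EuclideanSpace ℂ (Fin n)

variable {n : ℕ}

def XL (n : ℕ) (i : Fin n) : HypVS n →L[ℂ] ℂ :=
  (EuclideanSpace.proj i).comp ((ContinuousLinearMap.fst ℂ (Eu n) (Eu n)).comp
    (WithLp.prodContinuousLinearEquiv 2 ℂ (Eu n) (Eu n)).toContinuousLinearMap)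

def YL (n : ℕ) (i : Fin n) : HypVS n →L[ℂ] ℂ :=
  (EuclideanSpace.proj i).comp ((ContinuousLinearMap.snd ℂ (Eu n) (Eu n)).comp
    (WithLp.prodContinuousLinearEquiv 2 ℂ (Eu n) (Eu n)).toContinuousLinearMap)

@[simp] lemma XL_apply (i : Fin n) (p : HypVS n) : XL n i p = p.fst i := rfl
@[simp] lemma YL_apply (i : Fin n) (p : HypVS n) : YL n i p = p.snd i := rfl

/-- the complex derivative of μ at p -/
def DmuC (n : ℕ) (p : HypVS n) : HypVS n →L[ℂ] ℂ :=
  ∑ i, (p.fst i • YL n i + p.snd i • XL n i)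

lemma DmuC_apply (p v : HypVS n) :
    DmuC n p v = ∑ i, (p.fst i * v.snd i + p.snd i * v.fst i) := by
  simp [DmuC, ContinuousLinearMap.sum_apply, smul_eq_mul]

lemma hasFDerivAt_mu (c : ℂ) (p : HypVS n) :
    HasFDerivAt (fun q : HypVS n => (∑ i, q.fst i * q.snd i) - c) (DmuC n p) p := by
  have h : ∀ i : Fin n, HasFDerivAt (fun q : HypVS n => q.fst i * q.snd i)
      (p.fst i • YL n i + p.snd i • XL n i) p := by
    intro i
    have := ((XL n i).hasFDerivAt (x := p)).mul ((YL n i).hasFDerivAt (x := p))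
    simp only [XL_apply, YL_apply] at this
    exact this
  have := HasFDerivAt.sum (fun i (_ : i ∈ Finset.univ) => h i)
  simpa [DmuC] using this.sub_const c

def mu (n : ℕ) (c : ℂ) (p : HypVS n) : ℂ := (∑ i, p.fst i * p.snd i) - c

def Grad (n : ℕ) (c : ℂ) (p : HypVS n) : HypVS n :=
  (WithLp.equiv 2 (Eu n × Eu n)).symm
    ((WithLp.toLp 2 (fun i => 2 * mu n c p * conj (p.snd i)) : Eu n),
     (WithLp.toLp 2 (fun i => 2 * mu n c p * conj (p.fst i)) : Eu n))

@[simp] lemma Grad_fst (c : ℂ) (p : HypVS n) (i : Fin n) :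
    (Grad n c p).fst i = 2 * mu n c p * conj (p.snd i) := rfl
@[simp] lemma Grad_snd (c : ℂ) (p : HypVS n) (i : Fin n) :
    (Grad n c p).snd i = 2 * mu n c p * conj (p.fst i) := rfl

local notation "⟪" x ", " y "⟫" => @inner ℝ _ _ x y

lemma hasGradientAt_f (c : ℂ) (p : HypVS n) :
    HasGradientAt (fun q : HypVS n => ‖mu n c q‖ ^ 2) (Grad n c p) p := by
  have hmu : HasFDerivAt (mu n c) ((DmuC n p).restrictScalars ℝ) p :=
    (hasFDerivAt_mu c p).restrictScalars ℝ
  have hinner : HasFDerivAt (fun q : HypVS n => ⟪mu n c q, mu n c q⟫)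
      ((fderivInnerCLM ℝ (mu n c p, mu n c p)).comp
        (((DmuC n p).restrictScalars ℝ).prod ((DmuC n p).restrictScalars ℝ))) p :=
    hmu.inner ℝ hmu
  have heq : (fun q : HypVS n => ⟪mu n c q, mu n c q⟫) = fun q => ‖mu n c q‖ ^ 2 := by
    funext q; exact real_inner_self_eq_norm_sq _
  rw [heq] at hinner
  have hD : ((fderivInnerCLM ℝ (mu n c p, mu n c p)).comp
        (((DmuC n p).restrictScalars ℝ).prod ((DmuC n p).restrictScalars ℝ)))
      = InnerProductSpace.toDual ℝ (HypVS n) (Grad n c p) := by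
    apply ContinuousLinearMap.ext
    intro v
    have hv : DmuC n p v = ∑ i, (p.fst i * v.snd i + p.snd i * v.fst i) := DmuC_apply p v
    simp only [ContinuousLinearMap.comp_apply, ContinuousLinearMap.prod_apply,
      ContinuousLinearMap.coe_restrictScalars', fderivInnerCLM_apply,
      InnerProductSpace.toDual_apply_apply]
    rw [hv, WithLp.prod_inner_apply, PiLp.inner_apply, PiLp.inner_apply]
    simp only [Complex.inner, WithLp.ofLp_fst, WithLp.ofLp_snd, Grad_fst, Grad_snd, real_inner_comm]
    rw [← Finset.sum_add_distrib, Finset.sum_mul, Complex.re_sum, ← Finset.sum_add_distrib]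
    apply Finset.sum_congr rfl
    intro i _
    simp only [Complex.mul_re, Complex.mul_im, Complex.add_re, Complex.add_im,
      Complex.conj_re, Complex.conj_im, Complex.re_ofNat, Complex.im_ofNat]
    ring
  rw [hD] at hinner
  simpa using hinner.hasGradientAt

lemma norm_Grad_sq (c : ℂ) (p : HypVS n) :
    ‖Grad n c p‖ ^ 2 = 4 * ‖mu n c p‖ ^ 2 * ‖p‖ ^ 2 := by
  rw [WithLp.prod_norm_sq_eq_of_L2, WithLp.prod_norm_sq_eq_of_L2 p,
    PiLp.norm_sq_eq_of_L2, PiLp.norm_sq_eq_of_L2, PiLp.norm_sq_eq_of_L2 _ p.fst,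
    PiLp.norm_sq_eq_of_L2 _ p.snd]
  simp only [Grad_fst, Grad_snd, norm_mul, RCLike.norm_conj, Complex.norm_ofNat, mul_pow]
  rw [mul_add, Finset.mul_sum, Finset.mul_sum]
  rw [add_comm]
  congr 1 <;> · apply Finset.sum_congr rfl; intro i _; ring

lemma inner_Grad (c : ℂ) (p : HypVS n) :
    (inner ℝ (Grad n c p) p : ℝ) =
      (4 * (starRingEnd ℂ) (mu n c p) * ∑ i, p.fst i * p.snd i).re := by
  rw [WithLp.prod_inner_apply, PiLp.inner_apply, PiLp.inner_apply]
  simp only [Complex.inner, WithLp.ofLp_fst, WithLp.ofLp_snd, Grad_fst, Grad_snd]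
  rw [Finset.mul_sum, Complex.re_sum, ← Finset.sum_add_distrib]
  apply Finset.sum_congr rfl
  intro i _
  simp only [Complex.mul_re, Complex.mul_im, Complex.add_re, Complex.add_im,
    Complex.conj_re, Complex.conj_im, Complex.re_ofNat, Complex.im_ofNat]
  ring

lemma barrier {φ φ' : ℝ → ℝ} {M : ℝ}
    (hd : ∀ t, 0 ≤ t → HasDerivAt φ (φ' t) t) (h0 : φ 0 ≤ M)
    (hneg : ∀ t, 0 < t → M < φ t → φ' t ≤ 0) : ∀ t, 0 ≤ t → φ t ≤ M := by
  intro t₁ ht₁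
  by_contra hM
  push_neg at hM
  have ht₁pos : 0 < t₁ := by
    rcases ht₁.lt_or_eq with h | h
    · exact h
    · exfalso; rw [h] at h0; linarith
  have hcont : ContinuousOn φ (Set.Icc 0 t₁) := fun u hu =>
    ((hd u hu.1).continuousAt).continuousWithinAt
  set S := Set.Icc 0 t₁ ∩ φ ⁻¹' Set.Iic M with hS
  have hSclosed : IsClosed S :=
    hcont.preimage_isClosed_of_isClosed isClosed_Icc isClosed_Iic
  have hS0 : (0:ℝ) ∈ S := ⟨⟨le_refl 0, ht₁⟩, h0⟩
  have hScpt : IsCompact S :=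
    isCompact_Icc.of_isClosed_subset hSclosed Set.inter_subset_left
  set s₀ := sSup S with hs₀def
  have hs₀S : s₀ ∈ S := hScpt.sSup_mem ⟨0, hS0⟩
  have hs₀0 : 0 ≤ s₀ := hs₀S.1.1
  have hs₀M : φ s₀ ≤ M := hs₀S.2
  have hs₀lt : s₀ < t₁ := lt_of_le_of_ne hs₀S.1.2 (by
    intro h; rw [h] at hs₀M; linarith)
  have hgt : ∀ u ∈ Set.Ioc s₀ t₁, M < φ u := by
    intro u hu
    by_contra h
    push_neg at h
    have huS : u ∈ S := ⟨⟨le_trans hs₀0 hu.1.le, hu.2⟩, h⟩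
    have hle := le_csSup hScpt.bddAbove huS
    exact absurd hle (not_le.mpr hu.1)
  have hanti : AntitoneOn φ (Set.Icc s₀ t₁) := by
    apply antitoneOn_of_deriv_nonpos (convex_Icc _ _)
    · exact hcont.mono (Set.Icc_subset_Icc hs₀0 le_rfl)
    · intro u hu
      rw [interior_Icc] at hu
      exact ((hd u (le_trans hs₀0 hu.1.le)).differentiableAt).differentiableWithinAt
    · intro u hu
      rw [interior_Icc] at hu
      rw [(hd u (le_trans hs₀0 hu.1.le)).deriv]
      exact hneg u (lt_of_le_of_lt hs₀0 hu.1) (hgt u ⟨hu.1, hu.2.le⟩)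
  have := hanti ⟨le_refl s₀, hs₀lt.le⟩ ⟨hs₀lt.le, le_refl t₁⟩ hs₀lt.le
  linarith

theorem stmt1 (n : ℕ) (c : ℂ) (f ρ : HypVS n → ℝ)
    (hf : ∀ p, f p = ‖(∑ i, xPart p i * yPart p i) - c‖ ^ 2)
    (hρ : ∀ p, ρ p = ‖xPart p‖ ^ 2 + ‖yPart p‖ ^ 2)
    (γ : ℝ → HypVS n)
    (hγ : ∀ t : ℝ, 0 ≤ t → HasDerivAt γ (-(gradient f (γ t))) t)
    (hne : ∀ t : ℝ, 0 ≤ t → (∑ i, xPart (γ t) i * yPart (γ t) i) ≠ c) :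
    ∀ t : ℝ, 0 ≤ t →
      ρ (γ t) + Real.sqrt (f (γ t)) ≤
        max (4 * ‖c‖ + Real.sqrt (f (γ 0))) (ρ (γ 0) + Real.sqrt (f (γ 0))) := by
  have hfp : ∀ p, f p = ‖mu n c p‖ ^ 2 := by
    intro p; rw [hf p]; rfl
  have hρp : ∀ p, ρ p = ‖p‖ ^ 2 := by
    intro p; rw [hρ p]; exact (WithLp.prod_norm_sq_eq_of_L2 p).symm
  have hffun : f = fun q => ‖mu n c q‖ ^ 2 := funext hfp
  have hgrad : ∀ p : HypVS n, gradient f p = Grad n c p := by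
    intro p
    have h : HasGradientAt f (Grad n c p) p := by
      rw [hffun]; exact hasGradientAt_f c p
    exact h.gradient
  have hγ' : ∀ t, 0 ≤ t → HasDerivAt γ (-(Grad n c (γ t))) t := by
    intro t ht; rw [← hgrad]; exact hγ t ht
  have hfpos : ∀ t, 0 ≤ t → 0 < ‖mu n c (γ t)‖ := by
    intro t ht
    apply norm_pos_iff.mpr
    exact sub_ne_zero_of_ne (hne t ht)
  have hder_f : ∀ t, 0 ≤ t → HasDerivAt (fun u => f (γ u))
      (-(4 * ‖mu n c (γ t)‖ ^ 2 * ‖γ t‖ ^ 2)) t := by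
    intro t ht
    have hF : HasFDerivAt f (InnerProductSpace.toDual ℝ (HypVS n) (Grad n c (γ t))) (γ t) := by
      rw [hffun]; exact (hasGradientAt_f c (γ t)).hasFDerivAt
    have h := hF.comp_hasDerivAt t (hγ' t ht)
    refine h.congr_deriv ?_
    rw [InnerProductSpace.toDual_apply_apply, inner_neg_right, real_inner_self_eq_norm_sq,
      norm_Grad_sq]
  have hder_ρ : ∀ t, 0 ≤ t → HasDerivAt (fun u => ρ (γ u))
      (-(2 * (inner ℝ (Grad n c (γ t)) (γ t) : ℝ))) t := by
    intro t ht
    have hρfun : (fun u => ρ (γ u)) = fun u => (inner ℝ (γ u) (γ u) : ℝ) := by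
      funext u; rw [hρp]; exact (real_inner_self_eq_norm_sq _).symm
    rw [hρfun]
    have h := (hγ' t ht).inner ℝ (hγ' t ht)
    refine h.congr_deriv ?_
    rw [inner_neg_left, inner_neg_right, real_inner_comm (γ t)]
    ring
  have hder_g : ∀ t, 0 ≤ t → HasDerivAt (fun u => Real.sqrt (f (γ u)))
      (-(2 * ‖mu n c (γ t)‖ * ‖γ t‖ ^ 2)) t := by
    intro t ht
    have hfne : f (γ t) ≠ 0 := by
      rw [hfp]; exact pow_ne_zero 2 (ne_of_gt (hfpos t ht))
    have h := (Real.hasDerivAt_sqrt hfne).comp t (hder_f t ht)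
    refine h.congr_deriv ?_
    have ha : ‖mu n c (γ t)‖ ≠ 0 := ne_of_gt (hfpos t ht)
    have hA : ‖mu n c (γ t)‖ ≠ 0 := ha
    rw [hfp, Real.sqrt_sq (norm_nonneg _)]
    field_simp
    ring
  -- combined derivative of φ
  set Dφ : ℝ → ℝ := fun t =>
    -(2 * (inner ℝ (Grad n c (γ t)) (γ t) : ℝ)) + -(2 * ‖mu n c (γ t)‖ * ‖γ t‖ ^ 2) with hDφ
  have hφ : ∀ t, 0 ≤ t → HasDerivAt (fun u => ρ (γ u) + Real.sqrt (f (γ u))) (Dφ t) t :=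
    fun t ht => (hder_ρ t ht).add (hder_g t ht)
  -- antitonicity of √f ∘ γ on [0, ∞)
  have hganti : AntitoneOn (fun u => Real.sqrt (f (γ u))) (Set.Ici 0) := by
    apply antitoneOn_of_deriv_nonpos (convex_Ici 0)
    · exact fun u hu => (hder_g u hu).continuousAt.continuousWithinAt
    · intro u hu
      rw [interior_Ici] at hu
      exact (hder_g u hu.le).differentiableAt.differentiableWithinAt
    · intro u hu
      rw [interior_Ici] at hu
      rw [(hder_g u hu.le).deriv]
      have h1 := norm_nonneg (mu n c (γ u))
      have h2 := sq_nonneg ‖γ u‖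
      nlinarith
  set M : ℝ := max (4 * ‖c‖ + Real.sqrt (f (γ 0)))
      (ρ (γ 0) + Real.sqrt (f (γ 0))) with hM
  have sqrtf : ∀ t, Real.sqrt (f (γ t)) = ‖mu n c (γ t)‖ := by
    intro t; rw [hfp, Real.sqrt_sq (norm_nonneg _)]
  apply barrier hφ (le_max_right _ _)
  intro t ht hMt
  -- notation
  have ha : 0 < ‖mu n c (γ t)‖ := hfpos t ht.le
  have hgm : Real.sqrt (f (γ t)) ≤ Real.sqrt (f (γ 0)) :=
    hganti Set.self_mem_Ici ht.le ht.le
  have haa : ‖mu n c (γ t)‖ ≤ Real.sqrt (f (γ 0)) := by rw [← sqrtf t]; exact hgm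
  have hcabs : ‖c‖ = ‖c‖ := rfl
  -- from φ t > M : ρ (γ t) > 4‖c‖
  have hMge : 4 * ‖c‖ + Real.sqrt (f (γ 0)) ≤ M := by
    rw [hM]; exact le_max_left _ _
  have hRbig : 4 * ‖c‖ < ρ (γ t) := by
    have h := hMt
    rw [sqrtf t] at h
    linarith
  -- show Dφ t ≤ 0
  rw [hDφ]
  simp only
  rw [inner_Grad c (γ t)]
  set m := mu n c (γ t) with hm
  set a := ‖m‖ with hA
  have hs : m + c = ∑ i, (γ t).fst i * (γ t).snd i := by
    rw [hm]; simp only [mu]; ring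
  have hre : 4 * a ^ 2 - 4 * a * ‖c‖ ≤
      (4 * (starRingEnd ℂ) m * ∑ i, (γ t).fst i * (γ t).snd i).re := by
    rw [← hs]
    have e1 : 4 * (starRingEnd ℂ) m * (m + c)
        = 4 * ((starRingEnd ℂ) m * m) + 4 * ((starRingEnd ℂ) m * c) := by ring
    rw [e1, Complex.add_re]
    have h1 : ((starRingEnd ℂ) m * m).re = a ^ 2 :=
      by rw [mul_comm]; exact (Complex.inner m m).symm.trans (real_inner_self_eq_norm_sq m)
    have h2 : |((starRingEnd ℂ) m * c).re| ≤ a * ‖c‖ := by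
      calc |((starRingEnd ℂ) m * c).re| ≤ ‖(starRingEnd ℂ) m * c‖ :=
            Complex.abs_re_le_norm _
        _ = a * ‖c‖ := by
            rw [norm_mul, Complex.norm_conj, hA]
    have h3 : (4 * ((starRingEnd ℂ) m * m)).re = 4 * ((starRingEnd ℂ) m * m).re := by
      simp [Complex.mul_re]
    have h4 : (4 * ((starRingEnd ℂ) m * c)).re = 4 * ((starRingEnd ℂ) m * c).re := by
      simp [Complex.mul_re]
    have h5 := neg_abs_le ((starRingEnd ℂ) m * c).re
    rw [h3, h4, h1]
    linarith
  have hρval : ρ (γ t) = ‖γ t‖ ^ 2 := hρp _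
  have k2 : 8 * a * ‖c‖ ≤ 2 * a * ‖γ t‖ ^ 2 := by nlinarith
  nlinarith [sq_nonneg a]
end
end

section
/- Let c ∈ ℂ, f(x,y) = |∑_{i=1}^n x_i y_i − c|² and ρ(x,y) = ‖x‖² + ‖y‖² on ℂⁿ × ℂⁿ regarded as a real inner product space. Then for all (x,y), ⟨grad ρ(x,y), grad f(x,y)⟩ = 8 Re( μ_ℂ(x,y) · conj(∑_i x_i y_i) ), and this quantity is at least 8 f(x,y) − 8 |c| √(f(x,y)). -/
/-!
STATEMENT 3: `⟨grad ρ, grad f⟩ = 8 Re(μ_ℂ(x,y) · conj(∑ xᵢyᵢ)) ≥ 8 f - 8|c|√f`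
for `f = |μ_ℂ|²` and `ρ(x,y) = ‖x‖² + ‖y‖²` on `ℂⁿ × ℂⁿ` with its real inner product.
-/

noncomputable section

open scoped RealInnerProductSpace

-- CLM projections
def Lx {n : ℕ} (i : Fin n) : HypVS n →L[ℝ] ℂ :=
  ((EuclideanSpace.proj i).comp ((ContinuousLinearMap.fst ℂ _ _).comp
    (WithLp.prodContinuousLinearEquiv 2 ℂ _ _).toContinuousLinearMap)).restrictScalars ℝ

def Ly {n : ℕ} (i : Fin n) : HypVS n →L[ℝ] ℂ :=
  ((EuclideanSpace.proj i).comp ((ContinuousLinearMap.snd ℂ _ _).comp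
    (WithLp.prodContinuousLinearEquiv 2 ℂ _ _).toContinuousLinearMap)).restrictScalars ℝ

lemma Lx_apply {n : ℕ} (i : Fin n) (q : HypVS n) : Lx i q = xPart q i := rfl
lemma Ly_apply {n : ℕ} (i : Fin n) (q : HypVS n) : Ly i q = yPart q i := rfl

lemma inner_gradient {n : ℕ} (f : HypVS n → ℝ) (p v : HypVS n) :
    ⟪gradient f p, v⟫ = fderiv ℝ f p v := by
  rw [gradient, InnerProductSpace.toDual_symm_apply]

lemma grad_rho {n : ℕ} (ρ : HypVS n → ℝ)
    (hρ : ∀ p, ρ p = ‖xPart p‖ ^ 2 + ‖yPart p‖ ^ 2) (p : HypVS n) :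
    gradient ρ p = (2:ℝ) • p := by
  have hρfun : ρ = fun q : HypVS n => ⟪q, q⟫ := by
    funext q
    rw [hρ q, real_inner_self_eq_norm_sq, WithLp.prod_norm_sq_eq_of_L2]
    rfl
  have hD : HasFDerivAt (fun q : HypVS n => ⟪q, q⟫)
      ((fderivInnerCLM ℝ (p, p)).comp ((ContinuousLinearMap.id ℝ _).prod
        (ContinuousLinearMap.id ℝ _))) p :=
    (hasFDerivAt_id p).inner ℝ (hasFDerivAt_id p)
  have hG : HasGradientAt ρ ((2:ℝ) • p) p := by
    rw [hasGradientAt_iff_hasFDerivAt, hρfun]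
    refine hD.congr_fderiv ?_
    ext v
    simp [InnerProductSpace.toDual_apply_apply, fderivInnerCLM_apply, real_inner_smul_left,
      real_inner_comm p v, two_mul]
  exact hG.gradient

theorem stmt3 (n : ℕ) (c : ℂ) (f ρ : HypVS n → ℝ)
    (hf : ∀ p, f p = ‖muC c p‖ ^ 2)
    (hρ : ∀ p, ρ p = ‖xPart p‖ ^ 2 + ‖yPart p‖ ^ 2)
    (p : HypVS n) :
    ⟪gradient ρ p, gradient f p⟫ =
        8 * (muC c p * (starRingEnd ℂ) (∑ i, xPart p i * yPart p i)).re ∧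
    8 * f p - 8 * ‖c‖ * Real.sqrt (f p) ≤ ⟪gradient ρ p, gradient f p⟫ := by
  set S : ℂ := ∑ i, xPart p i * yPart p i with hSdef
  set a : ℂ := muC c p with hadef
  set DS : HypVS n →L[ℝ] ℂ := ∑ i : Fin n, (xPart p i • Ly i + yPart p i • Lx i) with hDSdef
  have hterm : ∀ i : Fin n, HasFDerivAt (fun q : HypVS n => xPart q i * yPart q i)
      (xPart p i • Ly i + yPart p i • Lx i) p := fun i =>
    ((Lx i).hasFDerivAt (x := p)).mul ((Ly i).hasFDerivAt)
  have hSd : HasFDerivAt (fun q : HypVS n => ∑ i, xPart q i * yPart q i) DS p :=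
    HasFDerivAt.fun_sum (fun i _ => hterm i)
  have hμ : HasFDerivAt (muC c) DS p := hSd.sub_const c
  have hre : HasFDerivAt (fun q : HypVS n => (muC c q).re) (Complex.reCLM.comp DS) p :=
    (Complex.reCLM.hasFDerivAt).comp p hμ
  have him : HasFDerivAt (fun q : HypVS n => (muC c q).im) (Complex.imCLM.comp DS) p :=
    (Complex.imCLM.hasFDerivAt).comp p hμ
  set R : HypVS n →L[ℝ] ℝ := Complex.reCLM.comp DS with hRdef
  set I : HypVS n →L[ℝ] ℝ := Complex.imCLM.comp DS with hIdef
  have hf2 : HasFDerivAt f ((a.re • R + a.re • R) + (a.im • I + a.im • I)) p := by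
    have hfe : f = fun q => (muC c q).re * (muC c q).re + (muC c q).im * (muC c q).im := by
      funext q
      rw [hf q, ← Complex.normSq_eq_norm_sq, Complex.normSq_apply]
    rw [hfe]
    exact (hre.mul hre).add (him.mul him)
  have hDSp : DS p = 2 * S := by
    rw [hDSdef, hSdef]
    simp only [ContinuousLinearMap.sum_apply, ContinuousLinearMap.add_apply,
      ContinuousLinearMap.smul_apply, Lx_apply, Ly_apply, smul_eq_mul]
    rw [Finset.mul_sum]
    exact Finset.sum_congr rfl fun i _ => by ring
  have hgfp : ⟪gradient f p, p⟫ = 4 * (a * (starRingEnd ℂ) S).re := by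
    rw [inner_gradient, hf2.fderiv]
    rw [hRdef, hIdef]
    simp only [ContinuousLinearMap.add_apply, ContinuousLinearMap.smul_apply,
      ContinuousLinearMap.coe_comp', Function.comp_apply, smul_eq_mul, hDSp,
      Complex.reCLM_apply, Complex.imCLM_apply]
    simp [Complex.mul_re, Complex.mul_im]
    ring
  have h1 : ⟪gradient ρ p, gradient f p⟫ = 8 * (a * (starRingEnd ℂ) S).re := by
    rw [grad_rho ρ hρ p, real_inner_smul_left, real_inner_comm, hgfp]
    ring
  refine ⟨h1, ?_⟩
  rw [h1]
  have hfp : f p = ‖a‖ ^ 2 := hf p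
  have hsq : Real.sqrt (f p) = ‖a‖ := by
    rw [hfp, Real.sqrt_sq (norm_nonneg a)]
  have hSa : S = a + c := by simp only [hSdef, hadef, muC]; ring
  have hre2 : (a * (starRingEnd ℂ) S).re = Complex.normSq a + (a * (starRingEnd ℂ) c).re := by
    rw [hSa, map_add, mul_add, Complex.add_re, Complex.mul_conj]
    simp
  have habs : -(‖a‖ * ‖c‖) ≤ (a * (starRingEnd ℂ) c).re := by
    have h := Complex.abs_re_le_norm (a * (starRingEnd ℂ) c)
    rw [norm_mul, Complex.norm_conj] at h
    have := neg_abs_le (a * (starRingEnd ℂ) c).re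
    linarith
  have hnsq : Complex.normSq a = ‖a‖ ^ 2 := (Complex.sq_norm a).symm
  rw [hre2, hsq, hfp, hnsq]
  linarith [habs]
end
end

section
/- Let c ∈ ℂ, f(x,y) = |∑_{i=1}^n x_i y_i − c|² and ρ(x,y) = ‖x‖² + ‖y‖² on ℂⁿ × ℂⁿ regarded as a real inner product space. If (x,y) satisfies ∑_i x_i y_i ≠ c (so f(x,y) > 0), then the function ρ + √f is differentiable at (x,y) and ⟨grad(ρ + √f)(x,y), grad f(x,y)⟩ ≥ 8 f(x,y) + 2 √(f(x,y)) (ρ(x,y) − 4|c|). In particular, along the negative gradient flow of f, the quantity ρ + √f is nonincreasing at any time when ρ ≥ 4|c| and f > 0. -/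
/-!
STATEMENT 4: At points where `f = |μ_ℂ|² > 0`, the function `ρ + √f` is differentiable and
`⟨grad(ρ + √f), grad f⟩ ≥ 8 f + 2 √f (ρ - 4|c|)`.  In particular `ρ + √f` is nonincreasing
along the negative gradient flow of `f` at any time when `ρ ≥ 4|c|` and `f > 0`.
-/

noncomputable section

open scoped RealInnerProductSpace

open ComplexConjugate

@[simp] lemma xPart_def {n : ℕ} (v : HypVS n) : xPart v = v.ofLp.1 := rfl
@[simp] lemma yPart_def {n : ℕ} (v : HypVS n) : yPart v = v.ofLp.2 := rfl

def projX4 {n : ℕ} (i : Fin n) : HypVS n →L[ℝ] ℂ :=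
  ((EuclideanSpace.proj i).comp ((ContinuousLinearMap.fst ℂ _ _).comp
    (WithLp.prodContinuousLinearEquiv 2 ℂ (EuclideanSpace ℂ (Fin n))
      (EuclideanSpace ℂ (Fin n))).toContinuousLinearMap)).restrictScalars ℝ

def projY4 {n : ℕ} (i : Fin n) : HypVS n →L[ℝ] ℂ :=
  ((EuclideanSpace.proj i).comp ((ContinuousLinearMap.snd ℂ _ _).comp
    (WithLp.prodContinuousLinearEquiv 2 ℂ (EuclideanSpace ℂ (Fin n))
      (EuclideanSpace ℂ (Fin n))).toContinuousLinearMap)).restrictScalars ℝ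

@[simp] lemma projX4_apply {n : ℕ} (i : Fin n) (q : HypVS n) : projX4 i q = xPart q i := rfl
@[simp] lemma projY4_apply {n : ℕ} (i : Fin n) (q : HypVS n) : projY4 i q = yPart q i := rfl

def Dmu4 {n : ℕ} (c : ℂ) (q : HypVS n) : HypVS n →L[ℝ] ℂ :=
  ∑ i, (xPart q i • projY4 i + yPart q i • projX4 i)

lemma hasFDerivAt_muC {n : ℕ} (c : ℂ) (q : HypVS n) :
    HasFDerivAt (muC c) (Dmu4 c q) q := by
  have h : muC c = fun r : HypVS n => (∑ i, projX4 i r * projY4 i r) - c := rfl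
  rw [h]
  exact (HasFDerivAt.fun_sum fun i _ =>
    ((projX4 i).hasFDerivAt.mul (projY4 i).hasFDerivAt)).sub_const c

def gradF4 {n : ℕ} (c : ℂ) (q : HypVS n) : HypVS n :=
  (WithLp.equiv 2 _).symm
    ((WithLp.equiv 2 _).symm (fun i => 2 * muC c q * conj (yPart q i)),
     (WithLp.equiv 2 _).symm (fun i => 2 * muC c q * conj (xPart q i)))

@[simp] lemma xPart_gradF4 {n : ℕ} (c : ℂ) (q : HypVS n) (i : Fin n) :
    xPart (gradF4 c q) i = 2 * muC c q * conj (yPart q i) := rfl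
@[simp] lemma yPart_gradF4 {n : ℕ} (c : ℂ) (q : HypVS n) (i : Fin n) :
    yPart (gradF4 c q) i = 2 * muC c q * conj (xPart q i) := rfl

@[simp] lemma gradF4_fst {n : ℕ} (c : ℂ) (q : HypVS n) (i : Fin n) :
    (gradF4 c q).ofLp.1 i = 2 * muC c q * conj (yPart q i) := rfl
@[simp] lemma gradF4_snd {n : ℕ} (c : ℂ) (q : HypVS n) (i : Fin n) :
    (gradF4 c q).ofLp.2 i = 2 * muC c q * conj (xPart q i) := rfl

lemma toDual_gradF4 {n : ℕ} (c : ℂ) (q : HypVS n) :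
    (2 • (innerSL ℝ (muC c q)).comp (Dmu4 c q)) =
      InnerProductSpace.toDual ℝ (HypVS n) (gradF4 c q) := by
  ext v
  rw [InnerProductSpace.toDual_apply_apply, WithLp.prod_inner_apply]
  simp only [ContinuousLinearMap.smul_apply, ContinuousLinearMap.comp_apply, innerSL_apply_apply,
    Dmu4, ContinuousLinearMap.sum_apply, ContinuousLinearMap.add_apply,
    ContinuousLinearMap.smul_apply, projX4_apply, projY4_apply, smul_eq_mul,
    PiLp.inner_apply, RCLike.inner_apply, Complex.inner, gradF4_fst, gradF4_snd,
    smul_eq_mul, map_mul, map_sum, Complex.inner]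
  simp only [← Complex.re_sum, nsmul_eq_mul, Nat.cast_ofNat, two_mul]
  rw [← Complex.add_re, ← Complex.add_re, ← Finset.sum_add_distrib, ← Finset.sum_add_distrib]
  congr 1
  refine Finset.sum_congr rfl fun i _ => ?_
  simp only [map_mul, Complex.conj_conj, map_ofNat, xPart_def, yPart_def]
  ring

lemma hasGradientAt_f_s4 {n : ℕ} (c : ℂ) (f : HypVS n → ℝ)
    (hf : ∀ p, f p = ‖muC c p‖ ^ 2) (q : HypVS n) :
    HasGradientAt f (gradF4 c q) q := by
  have h1 : f = fun r => ‖muC c r‖ ^ 2 := funext fun r => by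
    rw [hf r]
  rw [hasGradientAt_iff_hasFDerivAt, ← toDual_gradF4, h1]
  exact (hasFDerivAt_muC c q).norm_sq

lemma enorm_sq {n : ℕ} (x : EuclideanSpace ℂ (Fin n)) :
    ‖x‖ ^ 2 = ∑ i, Complex.normSq (x i) := by
  rw [EuclideanSpace.norm_sq_eq]
  simp [Complex.sq_norm]

lemma inner_gradF4_self {n : ℕ} (c : ℂ) (q : HypVS n) :
    ⟪gradF4 c q, gradF4 c q⟫ =
      4 * ‖muC c q‖ ^ 2 * (‖xPart q‖ ^ 2 + ‖yPart q‖ ^ 2) := by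
  rw [WithLp.prod_inner_apply]
  simp only [PiLp.inner_apply, Complex.inner, gradF4_fst, gradF4_snd, map_mul,
    Complex.conj_conj, map_ofNat, enorm_sq, Complex.sq_norm, xPart_def, yPart_def]
  have key : ∀ a w : ℂ, (2 * a * (starRingEnd ℂ) w * (2 * (starRingEnd ℂ) a * w)).re
      = 4 * Complex.normSq a * Complex.normSq w := by
    intro a w
    have h : 2 * a * (starRingEnd ℂ) w * (2 * (starRingEnd ℂ) a * w)
        = ((4 * Complex.normSq a * Complex.normSq w : ℝ) : ℂ) := by
      rw [show 2 * a * (starRingEnd ℂ) w * (2 * (starRingEnd ℂ) a * w)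
          = 4 * (a * (starRingEnd ℂ) a) * (w * (starRingEnd ℂ) w) from by ring,
        Complex.mul_conj, Complex.mul_conj]
      push_cast
      ring
    rw [h, Complex.ofReal_re]
  simp only [key]
  rw [mul_add, Finset.mul_sum, Finset.mul_sum, add_comm (∑ _i, _)]

lemma inner_q_gradF4 {n : ℕ} (c : ℂ) (q : HypVS n) :
    ⟪q, gradF4 c q⟫ = 4 * ‖muC c q‖ ^ 2 + 4 * (muC c q * conj c).re := by
  rw [WithLp.prod_inner_apply]
  simp only [PiLp.inner_apply, Complex.inner, gradF4_fst, gradF4_snd, xPart_def, yPart_def,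
    ← Complex.re_sum]
  rw [← Complex.add_re]
  have e1 : ∀ a b : Fin n → ℂ,
      (∑ i, 2 * muC c q * (starRingEnd ℂ) (b i) * (starRingEnd ℂ) (a i))
        = 2 * muC c q * (starRingEnd ℂ) (∑ i, a i * b i) := by
    intro a b
    rw [map_sum, Finset.mul_sum]
    exact Finset.sum_congr rfl fun i _ => by rw [map_mul]; ring
  rw [e1, e1, show (∑ i, (q.ofLp.2 : Fin n → ℂ) i * (q.ofLp.1 : Fin n → ℂ) i)
      = ∑ i, (q.ofLp.1 : Fin n → ℂ) i * (q.ofLp.2 : Fin n → ℂ) i from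
    Finset.sum_congr rfl fun i _ => mul_comm _ _]
  have hsum : (∑ i, (q.ofLp.1 : Fin n → ℂ) i * (q.ofLp.2 : Fin n → ℂ) i) = muC c q + c := by
    simp [muC]
  rw [hsum]
  have hz : 2 * muC c q * (starRingEnd ℂ) (muC c q + c) +
      2 * muC c q * (starRingEnd ℂ) (muC c q + c) =
      ((4 * ‖muC c q‖ ^ 2 : ℝ) : ℂ) + 4 * (muC c q * (starRingEnd ℂ) c) := by
    rw [map_add]
    have : muC c q * (starRingEnd ℂ) (muC c q) = ((‖muC c q‖ ^ 2 : ℝ) : ℂ) := by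
      rw [Complex.mul_conj, Complex.sq_norm]
    push_cast at this ⊢
    linear_combination (4:ℂ) * this
  rw [hz]
  simp [← Complex.ofReal_pow]

lemma norm_sq_eq_parts {n : ℕ} (q : HypVS n) :
    ‖q‖ ^ 2 = ‖xPart q‖ ^ 2 + ‖yPart q‖ ^ 2 := by
  rw [← real_inner_self_eq_norm_sq, WithLp.prod_inner_apply,
    real_inner_self_eq_norm_sq, real_inner_self_eq_norm_sq]
  rfl

lemma hasGradientAt_rho {n : ℕ} (ρ : HypVS n → ℝ)
    (hρ : ∀ p, ρ p = ‖xPart p‖ ^ 2 + ‖yPart p‖ ^ 2) (q : HypVS n) :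
    HasGradientAt ρ ((2:ℝ) • q) q := by
  have h1 : ρ = fun r => ‖r‖ ^ 2 := funext fun r => by rw [hρ r, norm_sq_eq_parts]
  rw [hasGradientAt_iff_hasFDerivAt, h1]
  have h2 : HasFDerivAt (fun r : HypVS n => ‖r‖ ^ 2) (2 • innerSL ℝ q) q := by
    simpa using (hasFDerivAt_id q).norm_sq
  refine h2.congr_fderiv ?_
  ext v
  simp [InnerProductSpace.toDual_apply_apply, real_inner_smul_left, two_smul]

lemma hasGradientAt_sqrt_f {n : ℕ} (c : ℂ) (f : HypVS n → ℝ)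
    (hf : ∀ p, f p = ‖muC c p‖ ^ 2) (q : HypVS n) (hq : muC c q ≠ 0) :
    HasGradientAt (fun r => Real.sqrt (f r))
      ((1 / (2 * Real.sqrt (f q))) • gradF4 c q) q := by
  have h1 := hasGradientAt_f_s4 c f hf q
  rw [hasGradientAt_iff_hasFDerivAt] at h1 ⊢
  have hne : f q ≠ 0 := by
    rw [hf q]
    exact pow_ne_zero _ (norm_ne_zero_iff.mpr hq)
  have h2 := (Real.hasDerivAt_sqrt hne).comp_hasFDerivAt q h1
  refine h2.congr_fderiv ?_
  ext v
  simp [InnerProductSpace.toDual_apply_apply, real_inner_smul_left]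

lemma hasGradientAt_total {n : ℕ} (c : ℂ) (f ρ : HypVS n → ℝ)
    (hf : ∀ p, f p = ‖muC c p‖ ^ 2)
    (hρ : ∀ p, ρ p = ‖xPart p‖ ^ 2 + ‖yPart p‖ ^ 2)
    (q : HypVS n) (hq : muC c q ≠ 0) :
    HasGradientAt (fun r => ρ r + Real.sqrt (f r))
      ((2:ℝ) • q + (1 / (2 * Real.sqrt (f q))) • gradF4 c q) q := by
  have h1 := hasGradientAt_rho ρ hρ q
  have h2 := hasGradientAt_sqrt_f c f hf q hq
  rw [hasGradientAt_iff_hasFDerivAt] at h1 h2 ⊢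
  have := h1.add h2
  refine this.congr_fderiv ?_
  ext v
  simp [InnerProductSpace.toDual_apply_apply, inner_add_left]

lemma key_ineq {n : ℕ} (c : ℂ) (f ρ : HypVS n → ℝ)
    (hf : ∀ p, f p = ‖muC c p‖ ^ 2)
    (hρ : ∀ p, ρ p = ‖xPart p‖ ^ 2 + ‖yPart p‖ ^ 2)
    (q : HypVS n) (hq : muC c q ≠ 0) :
    8 * f q + 2 * Real.sqrt (f q) * (ρ q - 4 * ‖c‖) ≤
      ⟪(2:ℝ) • q + (1 / (2 * Real.sqrt (f q))) • gradF4 c q, gradF4 c q⟫ := by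
  have hapos : 0 < ‖muC c q‖ := norm_pos_iff.mpr hq
  have hfq : f q = ‖muC c q‖ ^ 2 := hf q
  have hsq : Real.sqrt (f q) = ‖muC c q‖ := by
    rw [hfq, Real.sqrt_sq hapos.le]
  rw [inner_add_left, real_inner_smul_left, real_inner_smul_left,
    inner_gradF4_self, inner_q_gradF4, hsq, hfq]
  have hρq : ‖xPart q‖ ^ 2 + ‖yPart q‖ ^ 2 = ρ q := (hρ q).symm
  rw [hρq]
  have hre : -(‖muC c q‖ * ‖c‖) ≤
      (muC c q * (starRingEnd ℂ) c).re := by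
    have h1 : |(muC c q * (starRingEnd ℂ) c).re| ≤
        ‖muC c q‖ * ‖c‖ := by
      calc |(muC c q * (starRingEnd ℂ) c).re|
          ≤ ‖muC c q * (starRingEnd ℂ) c‖ := Complex.abs_re_le_norm _
        _ = ‖muC c q‖ * ‖c‖ := by rw [norm_mul, Complex.norm_conj]
    linarith [neg_abs_le ((muC c q * (starRingEnd ℂ) c).re)]
  have e : 1 / (2 * ‖muC c q‖) *
      (4 * ‖muC c q‖ ^ 2 * ρ q) = 2 * ‖muC c q‖ * ρ q := by
    field_simp
    ring
  rw [e]
  nlinarith [hre, hapos]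

theorem stmt4 (n : ℕ) (c : ℂ) (f ρ : HypVS n → ℝ)
    (hf : ∀ p, f p = ‖muC c p‖ ^ 2)
    (hρ : ∀ p, ρ p = ‖xPart p‖ ^ 2 + ‖yPart p‖ ^ 2)
    (p : HypVS n) (hp : (∑ i, xPart p i * yPart p i) ≠ c) :
    (DifferentiableAt ℝ (fun q => ρ q + Real.sqrt (f q)) p ∧
      8 * f p + 2 * Real.sqrt (f p) * (ρ p - 4 * ‖c‖) ≤
        ⟪gradient (fun q => ρ q + Real.sqrt (f q)) p, gradient f p⟫) ∧
    -- in particular, `ρ + √f` is nonincreasing along the negative gradient flow of `f`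
    -- at any time when `ρ ≥ 4|c|` and `f > 0`
    ∀ (γ : ℝ → HypVS n) (t : ℝ), HasDerivAt γ (-(gradient f (γ t))) t →
      4 * ‖c‖ ≤ ρ (γ t) → 0 < f (γ t) →
      deriv (fun s => ρ (γ s) + Real.sqrt (f (γ s))) t ≤ 0 := by
  have hq' : muC c p ≠ 0 := sub_ne_zero.mpr hp
  have htot := hasGradientAt_total c f ρ hf hρ p hq'
  have hgf := hasGradientAt_f_s4 c f hf p
  constructor
  · refine ⟨htot.differentiableAt, ?_⟩
    rw [htot.gradient, hgf.gradient]
    exact key_ineq c f ρ hf hρ p hq'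
  · intro γ t hγ hρ4 hfpos
    have hqt : muC c (γ t) ≠ 0 := by
      intro h
      rw [hf (γ t), h] at hfpos
      simp at hfpos
    have htot' := hasGradientAt_total c f ρ hf hρ (γ t) hqt
    have hgf' := hasGradientAt_f_s4 c f hf (γ t)
    rw [hgf'.gradient] at hγ
    rw [hasGradientAt_iff_hasFDerivAt] at htot'
    have hcomp := htot'.comp_hasDerivAt t hγ
    have hval : (InnerProductSpace.toDual ℝ (HypVS n)
        ((2:ℝ) • γ t + (1 / (2 * Real.sqrt (f (γ t)))) • gradF4 c (γ t)))
        (-(gradF4 c (γ t))) =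
        -⟪(2:ℝ) • γ t + (1 / (2 * Real.sqrt (f (γ t)))) • gradF4 c (γ t), gradF4 c (γ t)⟫ := by
      rw [InnerProductSpace.toDual_apply_apply, inner_neg_right]
    rw [hval] at hcomp
    have hderiv : deriv (fun s => ρ (γ s) + Real.sqrt (f (γ s))) t =
        -⟪(2:ℝ) • γ t + (1 / (2 * Real.sqrt (f (γ t)))) • gradF4 c (γ t), gradF4 c (γ t)⟫ :=
      hcomp.deriv
    rw [hderiv]
    have hkey := key_ineq c f ρ hf hρ (γ t) hqt
    have h1 : 0 ≤ 8 * f (γ t) + 2 * Real.sqrt (f (γ t)) * (ρ (γ t) - 4 * ‖c‖) := by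
      have := Real.sqrt_nonneg (f (γ t))
      nlinarith
    linarith
end
end

section
/- Let E be a finite-dimensional real inner product space, and let f, g : E → ℝ be twice continuously differentiable functions such that ⟨grad f(y), grad g(y)⟩ = 0 for all y ∈ E. Suppose x ∈ E is a common critical point: grad f(x) = 0 and grad g(x) = 0. Let H_f = D(grad f)(x) and H_g = D(grad g)(x) be the Hessian operators of f and g at x (the derivatives of the gradient maps at x, viewed as linear endomorphisms of E). Then the Hessians anticommute: H_f ∘ H_g + H_g ∘ H_f = 0. -/
/-!
STATEMENT 7: If `f, g : E → ℝ` are C², their gradients are everywhere orthogonal, and `x` is a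
common critical point, then the Hessian operators (derivatives of the gradient maps) at `x`
anticommute: `H_f ∘ H_g + H_g ∘ H_f = 0`.
-/

open scoped RealInnerProductSpace

open InnerProductSpace

section Aux
variable {E : Type*} [NormedAddCommGroup E] [InnerProductSpace ℝ E] [FiniteDimensional ℝ E]

lemma grad_contDiff {f : E → ℝ} (hf : ContDiff ℝ 2 f) : ContDiff ℝ 1 (gradient f) :=
  ((toDual ℝ E).symm.contDiff).comp (hf.fderiv_right (by norm_num))

lemma inner_grad (f : E → ℝ) (y w : E) : ⟪gradient f y, w⟫ = fderiv ℝ f y w :=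
  toDual_symm_apply

lemma hess_apply {f : E → ℝ} (hf : ContDiff ℝ 2 f) (x v w : E) :
    ⟪fderiv ℝ (gradient f) x v, w⟫ = fderiv ℝ (fderiv ℝ f) x v w := by
  have hgrad : DifferentiableAt ℝ (gradient f) x :=
    ((grad_contDiff hf).differentiable one_ne_zero) x
  have hd2 : DifferentiableAt ℝ (fderiv ℝ f) x :=
    ((hf.fderiv_right (m := 1) (by norm_num)).differentiable (by norm_num)) x
  have h1 : fderiv ℝ (fun y => ⟪gradient f y, w⟫) x v
      = ⟪fderiv ℝ (gradient f) x v, w⟫ := by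
    rw [fderiv_inner_apply ℝ hgrad (differentiableAt_const w) v]
    simp
  have h2 : (fun y => ⟪gradient f y, w⟫) = fun y => fderiv ℝ f y w := by
    funext y; exact inner_grad f y w
  have h3 : fderiv ℝ (fun y => fderiv ℝ f y w) x v = fderiv ℝ (fderiv ℝ f) x v w := by
    rw [fderiv_clm_apply hd2 (differentiableAt_const w)]
    simp
  rw [← h1, h2, h3]

lemma hess_symm {f : E → ℝ} (hf : ContDiff ℝ 2 f) (x v w : E) :
    ⟪fderiv ℝ (gradient f) x v, w⟫ = ⟪fderiv ℝ (gradient f) x w, v⟫ := by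
  rw [hess_apply hf, hess_apply hf]
  exact (hf.contDiffAt.isSymmSndFDerivAt (by simp [minSmoothness_of_isRCLikeNormedField])) v w

end Aux


theorem stmt7 {E : Type*} [NormedAddCommGroup E] [InnerProductSpace ℝ E]
    [FiniteDimensional ℝ E]
    (f g : E → ℝ) (hf : ContDiff ℝ 2 f) (hg : ContDiff ℝ 2 g)
    (horth : ∀ y : E, ⟪gradient f y, gradient g y⟫ = 0)
    (x : E) (hfx : gradient f x = 0) (hgx : gradient g x = 0) :
    (fderiv ℝ (gradient f) x).comp (fderiv ℝ (gradient g) x) +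
      (fderiv ℝ (gradient g) x).comp (fderiv ℝ (gradient f) x) = 0 := by
  have hfd : Differentiable ℝ (gradient f) := (grad_contDiff hf).differentiable one_ne_zero
  have hgd : Differentiable ℝ (gradient g) := (grad_contDiff hg).differentiable one_ne_zero
  set Hf := fderiv ℝ (gradient f) x with hHf
  set Hg := fderiv ℝ (gradient g) x with hHg
  -- first-order identity everywhere
  have first : ∀ y v, ⟪gradient f y, fderiv ℝ (gradient g) y v⟫
      + ⟪fderiv ℝ (gradient f) y v, gradient g y⟫ = 0 := by
    intro y v
    have h0 : (fun t => ⟪gradient f t, gradient g t⟫) = fun _ => (0:ℝ) := funext horth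
    have := fderiv_inner_apply ℝ (hfd y) (hgd y) v
    rw [h0] at this
    simp only [fderiv_fun_const, Pi.zero_apply, ContinuousLinearMap.zero_apply] at this
    linarith [this]
  -- key limit identity
  have key : ∀ v w : E, ⟪Hf v, Hg w⟫ + ⟪Hf w, Hg v⟫ = 0 := by
    intro v w
    set c : ℝ → E := fun t => x + t • w with hc
    have hline : HasDerivAt c w 0 := by
      convert ((hasDerivAt_id (0:ℝ)).smul_const w).const_add x using 1 <;> simp [hc]
    have hc0 : c 0 = x := by simp [hc]
    have hcomp_g : HasDerivAt (fun t => gradient g (c t)) (Hg w) 0 :=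
      (hgd x).hasFDerivAt.comp_hasDerivAt_of_eq 0 hline hc0.symm
    have hcomp_f : HasDerivAt (fun t => gradient f (c t)) (Hf w) 0 :=
      (hfd x).hasFDerivAt.comp_hasDerivAt_of_eq 0 hline hc0.symm
    have tg : Filter.Tendsto (fun t : ℝ => t⁻¹ • gradient g (c t)) (nhdsWithin 0 {(0:ℝ)}ᶜ)
        (nhds (Hg w)) := by
      have := hasDerivAt_iff_tendsto_slope.1 hcomp_g
      refine this.congr fun t => ?_
      simp [slope_fun_def, hc0, hgx]
    have tf : Filter.Tendsto (fun t : ℝ => t⁻¹ • gradient f (c t)) (nhdsWithin 0 {(0:ℝ)}ᶜ)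
        (nhds (Hf w)) := by
      have := hasDerivAt_iff_tendsto_slope.1 hcomp_f
      refine this.congr fun t => ?_
      simp [slope_fun_def, hc0, hfx]
    have hcont_c : Continuous c := by fun_prop
    have tHf : Filter.Tendsto (fun t : ℝ => fderiv ℝ (gradient f) (c t) v)
        (nhdsWithin 0 {(0:ℝ)}ᶜ) (nhds (Hf v)) := by
      have hcont : Continuous fun t : ℝ => fderiv ℝ (gradient f) (c t) v :=
        (ContinuousLinearMap.apply ℝ E v).continuous.comp
          (((grad_contDiff hf).continuous_fderiv one_ne_zero).comp hcont_c)
      exact (hcont.tendsto' 0 (Hf v) (by rw [hc0])).mono_left nhdsWithin_le_nhds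
    have tHg : Filter.Tendsto (fun t : ℝ => fderiv ℝ (gradient g) (c t) v)
        (nhdsWithin 0 {(0:ℝ)}ᶜ) (nhds (Hg v)) := by
      have hcont : Continuous fun t : ℝ => fderiv ℝ (gradient g) (c t) v :=
        (ContinuousLinearMap.apply ℝ E v).continuous.comp
          (((grad_contDiff hg).continuous_fderiv one_ne_zero).comp hcont_c)
      exact (hcont.tendsto' 0 (Hg v) (by rw [hc0])).mono_left nhdsWithin_le_nhds
    have tsum : Filter.Tendsto
        (fun t : ℝ => ⟪fderiv ℝ (gradient f) (c t) v, t⁻¹ • gradient g (c t)⟫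
          + ⟪t⁻¹ • gradient f (c t), fderiv ℝ (gradient g) (c t) v⟫)
        (nhdsWithin 0 {(0:ℝ)}ᶜ) (nhds (⟪Hf v, Hg w⟫ + ⟪Hf w, Hg v⟫)) :=
      (tHf.inner tg).add (tf.inner tHg)
    have hzero : ∀ t : ℝ, t ≠ 0 →
        ⟪fderiv ℝ (gradient f) (c t) v, t⁻¹ • gradient g (c t)⟫
          + ⟪t⁻¹ • gradient f (c t), fderiv ℝ (gradient g) (c t) v⟫ = 0 := by
      intro t ht
      rw [real_inner_smul_right, real_inner_smul_left, ← mul_add]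
      have := first (c t) v
      rw [show ⟪fderiv ℝ (gradient f) (c t) v, gradient g (c t)⟫
          + ⟪gradient f (c t), fderiv ℝ (gradient g) (c t) v⟫ = 0 by linarith [this]]
      ring
    have tzero : Filter.Tendsto
        (fun t : ℝ => ⟪fderiv ℝ (gradient f) (c t) v, t⁻¹ • gradient g (c t)⟫
          + ⟪t⁻¹ • gradient f (c t), fderiv ℝ (gradient g) (c t) v⟫)
        (nhdsWithin 0 {(0:ℝ)}ᶜ) (nhds 0) := by
      refine Filter.Tendsto.congr' ?_ tendsto_const_nhds
      filter_upwards [self_mem_nhdsWithin] with t ht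
      exact (hzero t ht).symm
    exact tendsto_nhds_unique tsum tzero
  -- conclude using self-adjointness
  ext v
  apply ext_inner_right ℝ
  intro w
  simp only [ContinuousLinearMap.add_apply, ContinuousLinearMap.comp_apply,
    ContinuousLinearMap.zero_apply, inner_zero_left]
  rw [inner_add_left, hess_symm hf x (Hg v) w, hess_symm hg x (Hf v) w, ← hHf, ← hHg]
  linarith [key w v, real_inner_comm (Hg w) (Hf v)]
end

section
/- Let V be a finite-dimensional real inner product space and let A, B₂, B₃ be linear endomorphisms of V such that A is self-adjoint, B₂ and B₃ are skew-adjoint, the three operators A, B₂, B₃ pairwise commute, and ker A ⊆ ker B₂ ∩ ker B₃. Then for any v ∈ V, if A(B₂² + B₃²)v = 0 then B₂v = 0 and B₃v = 0; that is, ker(A(B₂² + B₃²)) ⊆ ker B₂ ∩ ker B₃. -/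
/-!
STATEMENT 10: If `A` is self-adjoint, `B₂, B₃` are skew-adjoint, the three pairwise commute,
and `ker A ⊆ ker B₂ ∩ ker B₃`, then `ker (A (B₂² + B₃²)) ⊆ ker B₂ ∩ ker B₃`.
-/

open scoped RealInnerProductSpace

theorem stmt10 {V : Type*} [NormedAddCommGroup V] [InnerProductSpace ℝ V]
    [FiniteDimensional ℝ V]
    (A B₂ B₃ : V →ₗ[ℝ] V)
    (hA : ∀ u v : V, ⟪A u, v⟫ = ⟪u, A v⟫)
    (h2 : ∀ u v : V, ⟪B₂ u, v⟫ = -⟪u, B₂ v⟫)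
    (h3 : ∀ u v : V, ⟪B₃ u, v⟫ = -⟪u, B₃ v⟫)
    (c2 : A ∘ₗ B₂ = B₂ ∘ₗ A) (c3 : A ∘ₗ B₃ = B₃ ∘ₗ A) (c23 : B₂ ∘ₗ B₃ = B₃ ∘ₗ B₂)
    (hker : LinearMap.ker A ≤ LinearMap.ker B₂ ⊓ LinearMap.ker B₃) :
    ∀ v : V, A ((B₂ ∘ₗ B₂ + B₃ ∘ₗ B₃) v) = 0 → B₂ v = 0 ∧ B₃ v = 0 := by
  have comm23 : ∀ x : V, B₂ (B₃ x) = B₃ (B₂ x) := fun x =>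
    congrFun (congrArg (fun f => f.toFun) c23) x
  -- key: if (B₂² + B₃²) u = 0 then B₂ u = 0 and B₃ u = 0
  have key : ∀ u : V, B₂ (B₂ u) + B₃ (B₃ u) = 0 → B₂ u = 0 ∧ B₃ u = 0 := by
    intro u hu
    have h : ⟪B₂ (B₂ u) + B₃ (B₃ u), u⟫ = 0 := by rw [hu]; simp
    rw [inner_add_left, h2, h3] at h
    have h2' : ⟪B₂ u, B₂ u⟫ + ⟪B₃ u, B₃ u⟫ = 0 := by linarith
    have p2 : (0:ℝ) ≤ ⟪B₂ u, B₂ u⟫ := real_inner_self_nonneg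
    have p3 : (0:ℝ) ≤ ⟪B₃ u, B₃ u⟫ := real_inner_self_nonneg
    constructor
    · exact inner_self_eq_zero.mp (le_antisymm (by linarith) p2)
    · exact inner_self_eq_zero.mp (le_antisymm (by linarith) p3)
  intro v hv
  have hw : B₂ (B₂ v) + B₃ (B₃ v) ∈ LinearMap.ker A := by
    simpa using hv
  have hw2 : B₂ (B₂ (B₂ v)) + B₃ (B₃ (B₂ v)) = 0 := by
    have := (hker hw).1
    have hB2w : B₂ (B₂ (B₂ v) + B₃ (B₃ v)) = 0 := this
    rw [map_add] at hB2w
    calc B₂ (B₂ (B₂ v)) + B₃ (B₃ (B₂ v))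
        = B₂ (B₂ (B₂ v)) + B₂ (B₃ (B₃ v)) := by rw [comm23, comm23]
      _ = 0 := hB2w
  have hw3 : B₂ (B₂ (B₃ v)) + B₃ (B₃ (B₃ v)) = 0 := by
    have := (hker hw).2
    have hB3w : B₃ (B₂ (B₂ v) + B₃ (B₃ v)) = 0 := this
    rw [map_add] at hB3w
    calc B₂ (B₂ (B₃ v)) + B₃ (B₃ (B₃ v))
        = B₃ (B₂ (B₂ v)) + B₃ (B₃ (B₃ v)) := by rw [← comm23, ← comm23]
      _ = 0 := hB3w
  have k2 := (key (B₂ v) hw2).1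
  have k3 := (key (B₃ v) hw3).2
  constructor
  · have : ⟪B₂ (B₂ v), v⟫ = 0 := by rw [k2]; simp
    rw [h2] at this
    have : ⟪B₂ v, B₂ v⟫ = 0 := by linarith
    exact inner_self_eq_zero.mp this
  · have : ⟪B₃ (B₃ v), v⟫ = 0 := by rw [k3]; simp
    rw [h3] at this
    have : ⟪B₃ v, B₃ v⟫ = 0 := by linarith
    exact inner_self_eq_zero.mp this
end

section
/- Let V be a finite-dimensional real inner product space and let A, B₁, B₂, B₃ be linear endomorphisms of V such that A is self-adjoint, B₁, B₂, B₃ are skew-adjoint, the operators A, B₂, B₃ pairwise commute, B₁ commutes with both B₂ and B₃, and ker A ⊆ ker B₂ ∩ ker B₃. Suppose ξ, ζ, η ∈ V satisfy the system: −B₃ζ + B₂η = 0, 2B₃ξ + Aζ − B₁η = 0, −2B₂ξ + B₁ζ + Aη = 0. Then ξ, ζ, η all lie in ker B₂ ∩ ker B₃. -/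
/-!
STATEMENT 11: Under the hypotheses of the kernel analysis in the proof of Lemma 5.5, if
`ξ, ζ, η` solve the system `-B₃ζ + B₂η = 0`, `2B₃ξ + Aζ - B₁η = 0`, `-2B₂ξ + B₁ζ + Aη = 0`,
then `ξ, ζ, η ∈ ker B₂ ∩ ker B₃`.
-/

open scoped RealInnerProductSpace

theorem stmt11 {V : Type*} [NormedAddCommGroup V] [InnerProductSpace ℝ V]
    [FiniteDimensional ℝ V]
    (A B₁ B₂ B₃ : V →ₗ[ℝ] V)
    (hA : ∀ u v : V, ⟪A u, v⟫ = ⟪u, A v⟫)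
    (h1 : ∀ u v : V, ⟪B₁ u, v⟫ = -⟪u, B₁ v⟫)
    (h2 : ∀ u v : V, ⟪B₂ u, v⟫ = -⟪u, B₂ v⟫)
    (h3 : ∀ u v : V, ⟪B₃ u, v⟫ = -⟪u, B₃ v⟫)
    (c2 : A ∘ₗ B₂ = B₂ ∘ₗ A) (c3 : A ∘ₗ B₃ = B₃ ∘ₗ A) (c23 : B₂ ∘ₗ B₃ = B₃ ∘ₗ B₂)
    (c12 : B₁ ∘ₗ B₂ = B₂ ∘ₗ B₁) (c13 : B₁ ∘ₗ B₃ = B₃ ∘ₗ B₁)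
    (hker : LinearMap.ker A ≤ LinearMap.ker B₂ ⊓ LinearMap.ker B₃)
    (ξ ζ η : V)
    (e1 : -(B₃ ζ) + B₂ η = 0)
    (e2 : (2 : ℝ) • B₃ ξ + A ζ - B₁ η = 0)
    (e3 : -((2 : ℝ) • B₂ ξ) + B₁ ζ + A η = 0) :
    (B₂ ξ = 0 ∧ B₃ ξ = 0) ∧ (B₂ ζ = 0 ∧ B₃ ζ = 0) ∧ (B₂ η = 0 ∧ B₃ η = 0) := by
  have c2' : ∀ v, A (B₂ v) = B₂ (A v) := fun v => LinearMap.congr_fun c2 v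
  have c3' : ∀ v, A (B₃ v) = B₃ (A v) := fun v => LinearMap.congr_fun c3 v
  have c23' : ∀ v, B₂ (B₃ v) = B₃ (B₂ v) := fun v => LinearMap.congr_fun c23 v
  have c12' : ∀ v, B₁ (B₂ v) = B₂ (B₁ v) := fun v => LinearMap.congr_fun c12 v
  have c13' : ∀ v, B₁ (B₃ v) = B₃ (B₁ v) := fun v => LinearMap.congr_fun c13 v
  have e1' : B₃ ζ = B₂ η := neg_add_eq_zero.mp e1
  have hAζ : A ζ = B₁ η - (2 : ℝ) • B₃ ξ := by
    linear_combination (norm := module) e2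
  have hAη : A η = (2 : ℝ) • B₂ ξ - B₁ ζ := by
    linear_combination (norm := module) e3
  -- Step 1: w := B₂ ζ + B₃ η is in ker A, hence killed by B₂ and B₃
  have hAw : A (B₂ ζ + B₃ η) = 0 := by
    rw [map_add, c2', c3', hAζ, hAη, map_sub, map_sub, map_smul, map_smul,
      ← c12' η, ← c13' ζ, c23' ξ, e1']
    abel
  have hwk : (B₂ ζ + B₃ η) ∈ LinearMap.ker B₂ ⊓ LinearMap.ker B₃ :=
    hker (LinearMap.mem_ker.mpr hAw)
  have hB2w : B₂ (B₂ ζ + B₃ η) = 0 := hwk.1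
  have hB3w : B₃ (B₂ ζ + B₃ η) = 0 := hwk.2
  -- Step 2: w = 0
  have hw : B₂ ζ + B₃ η = 0 := by
    have hin : ⟪B₂ ζ + B₃ η, B₂ ζ + B₃ η⟫ = 0 := by
      rw [inner_add_left, h2 ζ, h3 η, hB2w, hB3w, inner_zero_right, inner_zero_right]
      ring
    exact inner_self_eq_zero.mp hin
  -- Step 3: B₂ ξ = 0 and B₃ ξ = 0
  have E2 : (2 : ℝ) • B₃ (B₃ ξ) + A (B₂ η) - B₁ (B₃ η) = 0 := by
    have h := congrArg B₃ e2
    simp only [map_add, map_sub, map_smul, map_zero] at h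
    rwa [← c3' ζ, e1', ← c13' η] at h
  have E3 : -((2 : ℝ) • B₂ (B₂ ξ)) + B₁ (B₂ ζ) + A (B₂ η) = 0 := by
    have h := congrArg B₂ e3
    simp only [map_add, map_sub, map_neg, map_smul, map_zero] at h
    rwa [← c2' η, ← c12' ζ] at h
  have hsum : B₂ (B₂ ξ) + B₃ (B₃ ξ) = 0 := by
    have key : (2 : ℝ) • (B₂ (B₂ ξ) + B₃ (B₃ ξ)) = B₁ (B₂ ζ + B₃ η) := by
      rw [map_add]
      linear_combination (norm := module) E2 - E3
    rw [hw, map_zero] at key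
    rcases smul_eq_zero.mp key with h | h
    · norm_num at h
    · exact h
  have t : ⟪B₂ (B₂ ξ) + B₃ (B₃ ξ), ξ⟫ = 0 := by rw [hsum, inner_zero_left]
  rw [inner_add_left, h2 (B₂ ξ) ξ, h3 (B₃ ξ) ξ] at t
  have n2 := real_inner_self_nonneg (x := B₂ ξ)
  have n3 := real_inner_self_nonneg (x := B₃ ξ)
  have hB2ξ : B₂ ξ = 0 := inner_self_eq_zero.mp (by linarith : ⟪B₂ ξ, B₂ ξ⟫ = 0)
  have hB3ξ : B₃ ξ = 0 := inner_self_eq_zero.mp (by linarith : ⟪B₃ ξ, B₃ ξ⟫ = 0)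
  -- Step 4: ζ and η
  have hB3η : B₃ η = -(B₂ ζ) := eq_neg_of_add_eq_zero_right hw
  have hB2ζ : B₂ ζ = 0 := by
    have k1 : ⟪B₂ ζ, B₂ ζ⟫ = ⟪η, B₃ (B₂ ζ)⟫ := by
      nth_rewrite 1 [show B₂ ζ = -(B₃ η) from by rw [hB3η, neg_neg]]
      rw [inner_neg_left, h3 η (B₂ ζ)]; ring
    have k2 : ⟪B₃ ζ, B₃ ζ⟫ = -⟪η, B₂ (B₃ ζ)⟫ := by
      nth_rewrite 1 [e1']
      exact h2 η (B₃ ζ)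
    have hin : ⟪B₂ ζ, B₂ ζ⟫ + ⟪B₃ ζ, B₃ ζ⟫ = 0 := by
      rw [k1, k2, c23' ζ]; ring
    have m2 := real_inner_self_nonneg (x := B₂ ζ)
    have m3 := real_inner_self_nonneg (x := B₃ ζ)
    exact inner_self_eq_zero.mp (by linarith : ⟪B₂ ζ, B₂ ζ⟫ = 0)
  have hB3ζ : B₃ ζ = 0 := by
    have hin : ⟪B₃ ζ, B₃ ζ⟫ = 0 := by
      nth_rewrite 1 [e1']
      rw [h2 η (B₃ ζ), c23' ζ, hB2ζ, map_zero, inner_zero_right, neg_zero]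
    exact inner_self_eq_zero.mp hin
  have hB2η : B₂ η = 0 := by rw [← e1', hB3ζ]
  have hB3η' : B₃ η = 0 := by rw [hB3η, hB2ζ, neg_zero]
  exact ⟨⟨hB2ξ, hB3ξ⟩, ⟨hB2ζ, hB3ζ⟩, ⟨hB2η, hB3η'⟩⟩
end

section
/- Let V be a finite-dimensional real inner product space and let A, B₁, B₂, B₃ be linear endomorphisms of V such that A is self-adjoint, B₁, B₂, B₃ are skew-adjoint, the operators A, B₂, B₃ pairwise commute, B₁ commutes with both B₂ and B₃, and ker A ⊆ ker B₂ ∩ ker B₃. Define φ : V⁴ → V⁴ by φ(α, ξ, ζ, η) = (−B₂ζ − B₃η, −B₃ζ + B₂η, 2B₃ξ + Aζ − B₁η, −2B₂ξ + B₁ζ + Aη). Let S = ker B₂ ∩ ker B₃ and L = V × S × S × S ⊆ V⁴. Then φ(L) ⊆ L and φ⁻¹(L) ⊆ L, and consequently the induced linear endomorphism of the quotient space V⁴/L is bijective. -/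
/-!
STATEMENT 12: With `φ(α,ξ,ζ,η) = (-B₂ζ - B₃η, -B₃ζ + B₂η, 2B₃ξ + Aζ - B₁η, -2B₂ξ + B₁ζ + Aη)`
and `L = V × S × S × S` where `S = ker B₂ ∩ ker B₃`, we have `φ(L) ⊆ L`, `φ⁻¹(L) ⊆ L`, and the
induced endomorphism of `V⁴/L` is bijective.
-/

open scoped RealInnerProductSpace

theorem stmt12 {V : Type*} [NormedAddCommGroup V] [InnerProductSpace ℝ V]
    [FiniteDimensional ℝ V]
    (A B₁ B₂ B₃ : V →ₗ[ℝ] V)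
    (hA : ∀ u v : V, ⟪A u, v⟫ = ⟪u, A v⟫)
    (h1 : ∀ u v : V, ⟪B₁ u, v⟫ = -⟪u, B₁ v⟫)
    (h2 : ∀ u v : V, ⟪B₂ u, v⟫ = -⟪u, B₂ v⟫)
    (h3 : ∀ u v : V, ⟪B₃ u, v⟫ = -⟪u, B₃ v⟫)
    (c2 : A ∘ₗ B₂ = B₂ ∘ₗ A) (c3 : A ∘ₗ B₃ = B₃ ∘ₗ A) (c23 : B₂ ∘ₗ B₃ = B₃ ∘ₗ B₂)
    (c12 : B₁ ∘ₗ B₂ = B₂ ∘ₗ B₁) (c13 : B₁ ∘ₗ B₃ = B₃ ∘ₗ B₁)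
    (hker : LinearMap.ker A ≤ LinearMap.ker B₂ ⊓ LinearMap.ker B₃)
    (φ : (V × V × V × V) →ₗ[ℝ] (V × V × V × V))
    (hφ : ∀ w : V × V × V × V,
      φ w = (-(B₂ w.2.2.1) - B₃ w.2.2.2,
             -(B₃ w.2.2.1) + B₂ w.2.2.2,
             (2 : ℝ) • B₃ w.2.1 + A w.2.2.1 - B₁ w.2.2.2,
             -((2 : ℝ) • B₂ w.2.1) + B₁ w.2.2.1 + A w.2.2.2))
    (L : Submodule ℝ (V × V × V × V))
    (hL : L = (⊤ : Submodule ℝ V).prod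
      ((LinearMap.ker B₂ ⊓ LinearMap.ker B₃).prod
        ((LinearMap.ker B₂ ⊓ LinearMap.ker B₃).prod
          (LinearMap.ker B₂ ⊓ LinearMap.ker B₃)))) :
    (∀ w ∈ L, φ w ∈ L) ∧ (∀ w : V × V × V × V, φ w ∈ L → w ∈ L) ∧
    ∀ h : L ≤ L.comap φ, Function.Bijective (Submodule.mapQ L L φ h) := by
  have cA2 : ∀ x : V, A (B₂ x) = B₂ (A x) := fun x => LinearMap.congr_fun c2 x
  have cA3 : ∀ x : V, A (B₃ x) = B₃ (A x) := fun x => LinearMap.congr_fun c3 x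
  have c23' : ∀ x : V, B₂ (B₃ x) = B₃ (B₂ x) := fun x => LinearMap.congr_fun c23 x
  have c12' : ∀ x : V, B₁ (B₂ x) = B₂ (B₁ x) := fun x => LinearMap.congr_fun c12 x
  have c13' : ∀ x : V, B₁ (B₃ x) = B₃ (B₁ x) := fun x => LinearMap.congr_fun c13 x
  have part1 : ∀ w ∈ L, φ w ∈ L := by
    rintro ⟨α, ξ, ζ, η⟩ hw
    rw [hL] at hw
    simp only [Submodule.mem_prod, Submodule.mem_inf, LinearMap.mem_ker,
      Submodule.mem_top] at hw
    obtain ⟨-, ⟨hξ2, hξ3⟩, ⟨hζ2, hζ3⟩, hη2, hη3⟩ := hw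
    rw [hφ, hL]
    simp only [Submodule.mem_prod, Submodule.mem_inf, LinearMap.mem_ker, Submodule.mem_top]
    refine ⟨trivial, ⟨?_, ?_⟩, ⟨?_, ?_⟩, ?_, ?_⟩ <;>
      simp [map_add, map_sub, map_neg, map_smul, ← cA2, ← cA3, c23', ← c12', ← c13',
        hξ2, hξ3, hζ2, hζ3, hη2, hη3]
  have part2 : ∀ w : V × V × V × V, φ w ∈ L → w ∈ L := by
    rintro ⟨α, ξ, ζ, η⟩ hw
    rw [hφ, hL] at hw
    simp only [Submodule.mem_prod, Submodule.mem_inf, LinearMap.mem_ker,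
      Submodule.mem_top] at hw
    obtain ⟨-, ⟨k22, k23⟩, ⟨k32, k33⟩, k42, k43⟩ := hw
    -- Step 1: the second component is orthogonal to itself, hence zero
    have hw2 : B₂ η = B₃ ζ := by
      have e : ⟪-(B₃ ζ) + B₂ η, -(B₃ ζ) + B₂ η⟫ = 0 := by
        rw [inner_add_left, inner_neg_left, h3 ζ, h2 η, k22, k23, inner_zero_right,
          inner_zero_right]
        ring
      have e0 := inner_self_eq_zero.mp e
      have := neg_add_eq_zero.mp e0
      exact this.symm
    -- Step 2: A (B₂ ζ + B₃ η) = 0, hence B₂ ζ + B₃ η ∈ S, hence = 0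
    have hpzero : B₂ ζ + B₃ η = 0 := by
      have e1 := k32
      have e2 := k43
      simp only [map_add, map_sub, map_neg, map_smul] at e1 e2
      rw [← cA2, ← c12', hw2, c23'] at e1
      rw [← cA3, ← c13'] at e2
      have hAp : A (B₂ ζ + B₃ η) = 0 := by
        rw [map_add]
        linear_combination (norm := module) e1 + e2
      have hpS := hker (LinearMap.mem_ker.mpr hAp)
      rw [Submodule.mem_inf, LinearMap.mem_ker, LinearMap.mem_ker] at hpS
      have e : ⟪B₂ ζ + B₃ η, B₂ ζ + B₃ η⟫ = 0 := by
        rw [inner_add_left, h2 ζ, h3 η, hpS.1, hpS.2, inner_zero_right, inner_zero_right]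
        ring
      exact inner_self_eq_zero.mp e
    have hq : B₃ η = -(B₂ ζ) := eq_neg_of_add_eq_zero_right hpzero
    -- Step 3: (B₂² + B₃²) ξ = 0, hence B₂ ξ = B₃ ξ = 0
    have e3 := k33
    have e4 := k42
    simp only [map_add, map_sub, map_neg, map_smul] at e3 e4
    rw [← cA3, ← c13', hq, map_neg] at e3
    rw [← cA2, ← c12', hw2] at e4
    have hx : (2 : ℝ) • B₂ (B₂ ξ) + (2 : ℝ) • B₃ (B₃ ξ) = 0 := by
      linear_combination (norm := module) e3 - e4
    have e5 : ⟪(2 : ℝ) • B₂ (B₂ ξ) + (2 : ℝ) • B₃ (B₃ ξ), ξ⟫ = 0 := by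
      rw [hx, inner_zero_left]
    rw [inner_add_left, real_inner_smul_left, real_inner_smul_left, h2 (B₂ ξ) ξ,
      h3 (B₃ ξ) ξ] at e5
    have n2 := real_inner_self_nonneg (x := B₂ ξ)
    have n3 := real_inner_self_nonneg (x := B₃ ξ)
    have i2 : ⟪B₂ ξ, B₂ ξ⟫ = 0 := by linarith
    have i3 : ⟪B₃ ξ, B₃ ξ⟫ = 0 := by linarith
    have hξ2 : B₂ ξ = 0 := inner_self_eq_zero.mp i2
    have hξ3 : B₃ ξ = 0 := inner_self_eq_zero.mp i3
    -- Step 4: B₂ ζ = B₃ ζ = 0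
    have hBq : B₃ (B₃ ζ) = -(B₂ (B₂ ζ)) := by
      have h' : B₂ (B₃ η) = B₂ (-(B₂ ζ)) := congrArg _ hq
      rw [c23', hw2, map_neg] at h'
      exact h'
    have tq : ⟪B₂ ζ, B₂ ζ⟫ = -⟪B₃ ζ, B₃ ζ⟫ := by
      have t1 := h2 ζ (B₂ ζ)
      have t2 := h3 ζ (B₃ ζ)
      have t3 : ⟪ζ, B₃ (B₃ ζ)⟫ = -⟪ζ, B₂ (B₂ ζ)⟫ := by
        rw [hBq, inner_neg_right]
      linarith
    have m2 := real_inner_self_nonneg (x := B₂ ζ)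
    have m3 := real_inner_self_nonneg (x := B₃ ζ)
    have j2 : ⟪B₂ ζ, B₂ ζ⟫ = 0 := by linarith
    have j3 : ⟪B₃ ζ, B₃ ζ⟫ = 0 := by linarith
    have hζ2 : B₂ ζ = 0 := inner_self_eq_zero.mp j2
    have hζ3 : B₃ ζ = 0 := inner_self_eq_zero.mp j3
    have hη2 : B₂ η = 0 := by rw [hw2, hζ3]
    have hη3 : B₃ η = 0 := by rw [hq, hζ2, neg_zero]
    rw [hL]
    simp only [Submodule.mem_prod, Submodule.mem_inf, LinearMap.mem_ker, Submodule.mem_top]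
    exact ⟨trivial, ⟨hξ2, hξ3⟩, ⟨hζ2, hζ3⟩, hη2, hη3⟩
  refine ⟨part1, part2, ?_⟩
  intro h
  have hinj : Function.Injective (Submodule.mapQ L L φ h) := by
    rw [← LinearMap.ker_eq_bot, LinearMap.ker_eq_bot']
    intro m hm
    obtain ⟨w, rfl⟩ := Submodule.Quotient.mk_surjective L m
    rw [Submodule.mapQ_apply] at hm
    rw [Submodule.Quotient.mk_eq_zero] at hm ⊢
    exact part2 w hm
  exact ⟨hinj, LinearMap.injective_iff_surjective.mp hinj⟩
end
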